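/- arXiv:1806.02644 — 4 statements merged into one kernel-verified Lean document; each statement's English description precedes it below -/
import Mathlib

section
/- Let φ be a nonzero Bernstein function, let β ≥ 0 satisfy limsup_{u→∞} u^{−β} φ(u) < ∞, and let t > 0 with t·β ≤ 2. Then the sequence m_t(n) = (∏_{k=1}^n φ(k))^t (n ≥ 0, empty product equal to 1) is Stieltjes moment determinate: any two Borel probability measures on [0,∞) whose n-th moments equal m_t(n) for every n ≥ 0 coincide. In particular, if φ is bounded on [0,∞) then this determinacy holds for every t > 0. -/
open MeasureTheory Filter Topology Set
open scoped ENNReal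

noncomputable section
open scoped NNReal

/-- A representation of a Bernstein function: killing rate `k ≥ 0`, drift `d ≥ 0`, and a
Lévy measure `μ` on `(0,∞)` integrating `min 1 y`. -/
structure BernsteinRep (φ : ℝ → ℝ) where
  k : ℝ
  d : ℝ
  μ : Measure ℝ
  k_nonneg : 0 ≤ k
  d_nonneg : 0 ≤ d
  supp : μ (Set.Iic 0) = 0
  levy : ∫⁻ y, ENNReal.ofReal (min 1 y) ∂μ < ⊤
  eq : ∀ u : ℝ, 0 ≤ u → φ u = k + d * u + ∫ y, (1 - Real.exp (-(u * y))) ∂μ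

/-- `φ` is a Bernstein function. -/
def IsBernstein (φ : ℝ → ℝ) : Prop := Nonempty (BernsteinRep φ)

/-- `φ` is not identically zero on `[0,∞)`. -/
def BernsteinNonzero (φ : ℝ → ℝ) : Prop := ∃ u : ℝ, 0 ≤ u ∧ φ u ≠ 0

/-- A representation of a Bernstein function in the Jurek class: the Lévy measure has a
non-increasing density `v` on `(0,∞)`. -/
structure BernsteinJRep (φ : ℝ → ℝ) where
  k : ℝ
  d : ℝ
  v : ℝ → ℝ
  k_nonneg : 0 ≤ k
  d_nonneg : 0 ≤ d
  v_nonneg : ∀ y : ℝ, 0 < y → 0 ≤ v y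
  v_anti : ∀ y z : ℝ, 0 < y → y ≤ z → v z ≤ v y
  levy : ∫⁻ y in Set.Ioi (0:ℝ), ENNReal.ofReal (min 1 y * v y) < ⊤
  eq : ∀ u : ℝ, 0 ≤ u →
    φ u = k + d * u + ∫ y in Set.Ioi (0:ℝ), (1 - Real.exp (-(u * y))) * v y

/-- The moment sequence `n ↦ (∏_{k=1}^n φ(k))^t` of the Berg-Urbanik semigroup at time `t`. -/
def bergSeq (φ : ℝ → ℝ) (t : ℝ) (n : ℕ) : ℝ :=
  (∏ k ∈ Finset.Icc 1 n, φ (k : ℝ)) ^ t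

/-- The probability measure `ρ` is carried by `[0,∞)` and has `n`-th moments `m n`. -/
def HasMomentSeq (ρ : Measure ℝ) (m : ℕ → ℝ) : Prop :=
  ∀ n : ℕ, ∫⁻ x, ENNReal.ofReal (x ^ n) ∂ρ = ENNReal.ofReal (m n)

/-- Stieltjes moment determinacy of the sequence `m`. -/
def StieltjesDeterminate (m : ℕ → ℝ) : Prop :=
  ∀ ρ₁ ρ₂ : Measure ℝ, IsProbabilityMeasure ρ₁ → IsProbabilityMeasure ρ₂ →
    ρ₁ (Set.Iio 0) = 0 → ρ₂ (Set.Iio 0) = 0 →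
    HasMomentSeq ρ₁ m → HasMomentSeq ρ₂ m → ρ₁ = ρ₂

/-- Stieltjes moment indeterminacy of the sequence `m`. -/
def StieltjesIndeterminate (m : ℕ → ℝ) : Prop :=
  ∃ ρ₁ ρ₂ : Measure ℝ, IsProbabilityMeasure ρ₁ ∧ IsProbabilityMeasure ρ₂ ∧
    ρ₁ (Set.Iio 0) = 0 ∧ ρ₂ (Set.Iio 0) = 0 ∧ ρ₁ ≠ ρ₂ ∧
    HasMomentSeq ρ₁ m ∧ HasMomentSeq ρ₂ m

/-- The lower index `δ_φ = sup {δ ≥ 0 : liminf u^{-δ} φ(u) > 0}`. -/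
def lowerIndex (φ : ℝ → ℝ) : ℝ :=
  sSup {δ : ℝ | 0 ≤ δ ∧ ∃ c : ℝ, 0 < c ∧ ∀ᶠ u : ℝ in atTop, c * u ^ δ ≤ φ u}

/-- The Blumenthal-Getoor index `β_φ = inf {β ≥ 0 : limsup u^{-β} φ(u) < ∞}`. -/
def upperIndex (φ : ℝ → ℝ) : ℝ :=
  sInf {β : ℝ | 0 ≤ β ∧ ∃ C : ℝ, ∀ᶠ u : ℝ in atTop, φ u ≤ C * u ^ β}

/-- The Berg-Urbanik semigroup associated to `φ`: a multiplicative convolution semigroup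
of probability measures on `[0,∞)` starting at `δ_1` with moments `(∏_{k=1}^n φ(k))^t`. -/
def IsBergUrbanik (φ : ℝ → ℝ) (ν : ℝ → Measure ℝ) : Prop :=
  (∀ t : ℝ, 0 ≤ t → IsProbabilityMeasure (ν t)) ∧
  (∀ t : ℝ, 0 ≤ t → ν t (Set.Iio 0) = 0) ∧
  ν 0 = Measure.dirac 1 ∧
  (∀ s t : ℝ, 0 ≤ s → 0 ≤ t →
    Measure.map (fun p : ℝ × ℝ => p.1 * p.2) ((ν s).prod (ν t)) = ν (s + t)) ∧
  (∀ t : ℝ, 0 ≤ t → ∀ n : ℕ,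
    ∫⁻ x, ENNReal.ofReal (x ^ n) ∂(ν t) = ENNReal.ofReal (bergSeq φ t n))



lemma aux_int_of_cont {κ : Measure ℝ} [IsFiniteMeasure κ]
    (hκ : ∀ᵐ y ∂κ, y ∈ Set.Icc (0:ℝ) 1) {g : ℝ → ℝ} (hg : Continuous g) :
    Integrable g κ := by
  obtain ⟨C, hC⟩ := (isCompact_Icc (a := (0:ℝ)) (b := 1)).exists_bound_of_continuousOn
    hg.continuousOn
  refine (integrable_const C).mono' hg.aestronglyMeasurable ?_
  filter_upwards [hκ] with y hy using hC y hy

lemma aux_poly_integral {κ : Measure ℝ} [IsProbabilityMeasure κ]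
    (hκ : ∀ᵐ y ∂κ, y ∈ Set.Icc (0:ℝ) 1) (p : Polynomial ℝ) :
    ∫ y, p.eval y ∂κ
      = ∑ i ∈ Finset.range (p.natDegree + 1), p.coeff i * ∫ y, y ^ i ∂κ := by
  have h : ∀ y : ℝ, p.eval y = ∑ i ∈ Finset.range (p.natDegree + 1), p.coeff i * y ^ i := by
    intro y
    rw [Polynomial.eval_eq_sum_range]
  calc ∫ y, p.eval y ∂κ
      = ∫ y, ∑ i ∈ Finset.range (p.natDegree + 1), p.coeff i * y ^ i ∂κ := by
        exact integral_congr_ae (Eventually.of_forall h)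
    _ = ∑ i ∈ Finset.range (p.natDegree + 1), ∫ y, p.coeff i * y ^ i ∂κ := by
        refine integral_finset_sum _ fun i _ => ?_
        exact aux_int_of_cont hκ (by continuity)
    _ = ∑ i ∈ Finset.range (p.natDegree + 1), p.coeff i * ∫ y, y ^ i ∂κ := by
        exact Finset.sum_congr rfl fun i _ => integral_const_mul _ _

lemma haus_unique {κ₁ κ₂ : Measure ℝ} (p₁ : IsProbabilityMeasure κ₁)
    (p₂ : IsProbabilityMeasure κ₂)
    (h₁ : ∀ᵐ y ∂κ₁, y ∈ Set.Icc (0:ℝ) 1) (h₂ : ∀ᵐ y ∂κ₂, y ∈ Set.Icc (0:ℝ) 1)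
    (hmom : ∀ n : ℕ, ∫ y, y ^ n ∂κ₁ = ∫ y, y ^ n ∂κ₂) : κ₁ = κ₂ := by
  have habs : ∀ (κ : Measure ℝ), IsProbabilityMeasure κ → (∀ᵐ y ∂κ, y ∈ Set.Icc (0:ℝ) 1) →
      ∀ (g : ℝ → ℝ), Continuous g → ∀ (ε : ℝ), (∀ y ∈ Set.Icc (0:ℝ) 1, |g y| ≤ ε) →
      |∫ y, g y ∂κ| ≤ ε := by
    intro κ hκp hκ g hg ε hbd
    have hgi : Integrable g κ := aux_int_of_cont hκ hg
    calc |∫ y, g y ∂κ| ≤ ∫ y, |g y| ∂κ := by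
          rw [← Real.norm_eq_abs]
          simpa [Real.norm_eq_abs] using norm_integral_le_integral_norm (μ := κ) g
      _ ≤ ∫ _y, ε ∂κ := by
          refine integral_mono_ae hgi.abs (integrable_const ε) ?_
          filter_upwards [hκ] with y hy using hbd y hy
      _ = ε := by simp [measure_univ]
  refine ext_of_forall_lintegral_eq_of_IsFiniteMeasure (fun f => ?_)
  have hF₁ : Integrable (((↑) : ℝ≥0 → ℝ) ∘ ⇑f) κ₁ :=
    BoundedContinuousFunction.integrable_of_nnreal _ f
  have hF₂ : Integrable (((↑) : ℝ≥0 → ℝ) ∘ ⇑f) κ₂ :=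
    BoundedContinuousFunction.integrable_of_nnreal _ f
  have hFc : Continuous fun y : ℝ => ((f y : ℝ≥0) : ℝ) :=
    NNReal.continuous_coe.comp f.continuous
  have main : ∫ y, ((f y : ℝ≥0) : ℝ) ∂κ₁ = ∫ y, ((f y : ℝ≥0) : ℝ) ∂κ₂ := by
    set F : ℝ → ℝ := fun y => ((f y : ℝ≥0) : ℝ) with hF
    have key : ∀ ε : ℝ, 0 < ε →
        |∫ y, F y ∂κ₁ - ∫ y, F y ∂κ₂| ≤ 2 * ε := by
      intro ε hε
      obtain ⟨p, hp⟩ := exists_polynomial_near_of_continuousOn 0 1 F hFc.continuousOn ε hε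
      have hpc : Continuous fun y : ℝ => p.eval y := p.continuous
      have hpoly : ∫ y, p.eval y ∂κ₁ = ∫ y, p.eval y ∂κ₂ := by
        rw [aux_poly_integral h₁ p, aux_poly_integral h₂ p]
        exact Finset.sum_congr rfl fun i _ => by rw [hmom i]
      have e₁ : |∫ y, F y ∂κ₁ - ∫ y, p.eval y ∂κ₁| ≤ ε := by
        rw [← integral_sub (aux_int_of_cont h₁ hFc) (aux_int_of_cont h₁ hpc)]
        refine habs κ₁ p₁ h₁ _ (hFc.sub hpc) ε fun y hy => ?_
        rw [Pi.sub_apply, abs_sub_comm]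
        exact (hp y hy).le
      have e₂ : |∫ y, F y ∂κ₂ - ∫ y, p.eval y ∂κ₂| ≤ ε := by
        rw [← integral_sub (aux_int_of_cont h₂ hFc) (aux_int_of_cont h₂ hpc)]
        refine habs κ₂ p₂ h₂ _ (hFc.sub hpc) ε fun y hy => ?_
        rw [Pi.sub_apply, abs_sub_comm]
        exact (hp y hy).le
      calc |∫ y, F y ∂κ₁ - ∫ y, F y ∂κ₂|
          = |(∫ y, F y ∂κ₁ - ∫ y, p.eval y ∂κ₁)
              + ((∫ y, p.eval y ∂κ₁ - ∫ y, p.eval y ∂κ₂)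
              + (∫ y, p.eval y ∂κ₂ - ∫ y, F y ∂κ₂))| := by ring_nf
        _ ≤ 2 * ε := by
            have t1 := abs_add_le (∫ y, F y ∂κ₁ - ∫ y, p.eval y ∂κ₁)
              ((∫ y, p.eval y ∂κ₁ - ∫ y, p.eval y ∂κ₂)
                + (∫ y, p.eval y ∂κ₂ - ∫ y, F y ∂κ₂))
            have t2 := abs_add_le (∫ y, p.eval y ∂κ₁ - ∫ y, p.eval y ∂κ₂)
              (∫ y, p.eval y ∂κ₂ - ∫ y, F y ∂κ₂)
            have h0 : |∫ y, p.eval y ∂κ₁ - ∫ y, p.eval y ∂κ₂| = 0 := by simp [hpoly]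
            have h3 : |∫ y, p.eval y ∂κ₂ - ∫ y, F y ∂κ₂| ≤ ε := by
              rw [abs_sub_comm]; exact e₂
            linarith
    have : |∫ y, F y ∂κ₁ - ∫ y, F y ∂κ₂| ≤ 0 := by
      refine le_of_forall_pos_le_add fun ε hε => ?_
      calc |∫ y, F y ∂κ₁ - ∫ y, F y ∂κ₂| ≤ 2 * (ε / 2) := key (ε / 2) (by linarith)
        _ = 0 + ε := by ring
    have h0 : |∫ y, F y ∂κ₁ - ∫ y, F y ∂κ₂| = 0 := le_antisymm this (abs_nonneg _)
    have := abs_eq_zero.mp h0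
    linarith [this]
  calc ∫⁻ y, (f y : ℝ≥0∞) ∂κ₁ = ENNReal.ofReal (∫ y, ((f y : ℝ≥0) : ℝ) ∂κ₁) :=
        lintegral_coe_eq_integral _ hF₁
    _ = ENNReal.ofReal (∫ y, ((f y : ℝ≥0) : ℝ) ∂κ₂) := by rw [main]
    _ = ∫⁻ y, (f y : ℝ≥0∞) ∂κ₂ := (lintegral_coe_eq_integral _ hF₂).symm



namespace BergAux

/-- Laplace-type transform. -/
def lap (τ : Measure ℝ) (z : ℂ) : ℂ := ∫ u, Complex.exp (z * u) ∂τ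

section Core

variable {τ : Measure ℝ} {m : ℕ → ℝ} {B : ℝ}

lemma fact_sq_le (n : ℕ) : ((n.factorial : ℝ))^2 ≤ ((2*n).factorial : ℝ) := by
  have h : n.factorial * n.factorial ≤ (2*n).factorial := by
    refine Nat.le_of_dvd (Nat.factorial_pos _) ?_
    simpa [two_mul] using Nat.factorial_mul_factorial_dvd_factorial_add n n
  have := (Nat.cast_le (α := ℝ)).2 h
  push_cast at this
  nlinarith [this]

lemma m_le (hB : 1 ≤ B) (hg : ∀ n, m n ≤ B ^ n * ((n.factorial : ℝ))^2) (n : ℕ) :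
    m n ≤ B ^ n * ((2*n).factorial : ℝ) := by
  refine (hg n).trans ?_
  have h0 : (0:ℝ) ≤ B ^ n := by positivity
  exact mul_le_mul_of_nonneg_left (fact_sq_le n) h0

lemma J_bound (hB : 1 ≤ B)
    (hm0 : ∀ n, 0 ≤ m n) (hg : ∀ n, m n ≤ B ^ n * ((n.factorial : ℝ))^2)
    (hτ0 : ∀ᵐ u ∂τ, 0 ≤ u)
    (hmom : ∀ n, ∫⁻ u, ENNReal.ofReal (u ^ (2*n)) ∂τ = ENNReal.ofReal (m n)) (k : ℕ) :
    ∫⁻ u, ENNReal.ofReal (u ^ k) ∂τ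
      ≤ ENNReal.ofReal (2 * B ^ k * (((k+1).factorial : ℝ))) := by
  have hB0 : (0:ℝ) < B := lt_of_lt_of_le one_pos hB
  rcases Nat.even_or_odd k with ⟨n, hn⟩ | ⟨n, hn⟩
  · subst hn
    rw [show n + n = 2*n by ring, hmom n]
    refine ENNReal.ofReal_le_ofReal ?_
    calc m n ≤ B ^ n * ((2*n).factorial : ℝ) := m_le hB hg n
      _ ≤ B ^ (2*n) * (((2*n)+1).factorial : ℝ) := by
          refine mul_le_mul ?_ ?_ (by positivity) (by positivity)
          · exact pow_le_pow_right₀ hB (by omega)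
          · have := Nat.factorial_le (Nat.le_succ (2*n))
            exact_mod_cast this
      _ ≤ 2 * B ^ (2*n) * (((2*n)+1).factorial : ℝ) := by
          nlinarith [pow_pos hB0 (2*n), (Nat.cast_pos (α := ℝ)).2 (Nat.factorial_pos ((2*n)+1))]
    -- note (n+n) matched to 2*n
  · subst hn
    have hmeas : Measurable fun u : ℝ => ENNReal.ofReal (u ^ (2*n)) :=
      (measurable_id.pow_const _).ennreal_ofReal
    have hptw : ∀ᵐ u ∂τ, ENNReal.ofReal (u ^ (2*n+1))
        ≤ ENNReal.ofReal (u ^ (2*n)) + ENNReal.ofReal (u ^ (2*n+2)) := by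
      filter_upwards [hτ0] with u hu
      rcases le_total u 1 with h1 | h1
      · refine le_trans (ENNReal.ofReal_le_ofReal ?_) le_self_add
        exact pow_le_pow_of_le_one hu h1 (by omega)
      · refine le_trans (ENNReal.ofReal_le_ofReal ?_) le_add_self
        exact pow_le_pow_right₀ h1 (by omega)
    calc ∫⁻ u, ENNReal.ofReal (u ^ (2*n+1)) ∂τ
        ≤ ∫⁻ u, (ENNReal.ofReal (u ^ (2*n)) + ENNReal.ofReal (u ^ (2*n+2))) ∂τ :=
          lintegral_mono_ae hptw
      _ = ENNReal.ofReal (m n) + ENNReal.ofReal (m (n+1)) := by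
          rw [lintegral_add_left hmeas, hmom n, show 2*n+2 = 2*(n+1) by ring, hmom (n+1)]
      _ ≤ ENNReal.ofReal (2 * B ^ (2*n+1) * (((2*n+1)+1).factorial : ℝ)) := by
          rw [← ENNReal.ofReal_add (hm0 n) (hm0 (n+1))]
          refine ENNReal.ofReal_le_ofReal ?_
          have e1 : m n ≤ B ^ (2*n+1) * (((2*n+1)+1).factorial : ℝ) := by
            refine (m_le hB hg n).trans ?_
            refine mul_le_mul (pow_le_pow_right₀ hB (by omega)) ?_ (by positivity) (by positivity)
            exact_mod_cast Nat.factorial_le (by omega)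
          have e2 : m (n+1) ≤ B ^ (2*n+1) * (((2*n+1)+1).factorial : ℝ) := by
            refine (m_le hB hg (n+1)).trans ?_
            refine mul_le_mul (pow_le_pow_right₀ hB (by omega)) ?_ (by positivity) (by positivity)
            exact_mod_cast Nat.factorial_le (by omega)
          nlinarith [e1, e2]

lemma series_bound (hB : 1 ≤ B)
    (hm0 : ∀ n, 0 ≤ m n) (hg : ∀ n, m n ≤ B ^ n * ((n.factorial : ℝ))^2)
    (hτ0 : ∀ᵐ u ∂τ, 0 ≤ u)
    (hmom : ∀ n, ∫⁻ u, ENNReal.ofReal (u ^ (2*n)) ∂τ = ENNReal.ofReal (m n)) :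
    (∑' k : ℕ, ENNReal.ofReal ((2*B)⁻¹ ^ k / (k.factorial : ℝ))
        * ∫⁻ u, ENNReal.ofReal (u ^ k) ∂τ) < ⊤ := by
  have hB0 : (0:ℝ) < B := lt_of_lt_of_le one_pos hB
  set c : ℕ → ℝ := fun k => 2 * ((k:ℝ) + 1) * (2:ℝ)⁻¹ ^ k with hc
  have hterm : ∀ k, ENNReal.ofReal ((2*B)⁻¹ ^ k / (k.factorial : ℝ))
      * ∫⁻ u, ENNReal.ofReal (u ^ k) ∂τ ≤ ENNReal.ofReal (c k) := by
    intro k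
    calc ENNReal.ofReal ((2*B)⁻¹ ^ k / (k.factorial : ℝ)) * ∫⁻ u, ENNReal.ofReal (u ^ k) ∂τ
        ≤ ENNReal.ofReal ((2*B)⁻¹ ^ k / (k.factorial : ℝ))
            * ENNReal.ofReal (2 * B ^ k * (((k+1).factorial : ℝ))) := by
          exact mul_le_mul_right (J_bound hB hm0 hg hτ0 hmom k) _
      _ = ENNReal.ofReal ((2*B)⁻¹ ^ k / (k.factorial : ℝ)
            * (2 * B ^ k * (((k+1).factorial : ℝ)))) := by
          rw [← ENNReal.ofReal_mul (by positivity)]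
      _ = ENNReal.ofReal (c k) := by
          congr 1
          have hfk : ((k.factorial : ℝ)) ≠ 0 := by
            exact_mod_cast (Nat.factorial_pos k).ne'
          have hfs : (((k+1).factorial : ℝ)) = ((k:ℝ)+1) * (k.factorial : ℝ) := by
            rw [Nat.factorial_succ]; push_cast; ring
          have hpow : (2:ℝ) ^ k * B ^ k = (2*B) ^ k := by
            rw [← mul_pow]
          rw [hc]
          simp only
          rw [hfs, inv_pow, ← hpow]
          field_simp
          rw [one_div, ← mul_pow, mul_inv_cancel₀ two_ne_zero, one_pow]
  have hcs : Summable c := by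
    have s1 : Summable (fun k : ℕ => ((k:ℝ))^1 * (2:ℝ)⁻¹ ^ k) :=
      summable_pow_mul_geometric_of_norm_lt_one 1 (by rw [norm_inv]; norm_num)
    have s2 : Summable (fun k : ℕ => (2:ℝ)⁻¹ ^ k) :=
      summable_geometric_of_lt_one (by norm_num) (by norm_num)
    have : Summable (fun k : ℕ => 2 * (((k:ℝ))^1 * (2:ℝ)⁻¹ ^ k) + 2 * ((2:ℝ)⁻¹ ^ k)) :=
      ((s1.mul_left 2).add (s2.mul_left 2))
    refine this.congr fun k => ?_
    rw [hc]; ring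
  calc (∑' k : ℕ, ENNReal.ofReal ((2*B)⁻¹ ^ k / (k.factorial : ℝ))
        * ∫⁻ u, ENNReal.ofReal (u ^ k) ∂τ)
      ≤ ∑' k : ℕ, ENNReal.ofReal (c k) := ENNReal.tsum_le_tsum hterm
    _ = ENNReal.ofReal (∑' k, c k) :=
        (ENNReal.ofReal_tsum_of_nonneg (fun k => by positivity) hcs).symm
    _ < ⊤ := ENNReal.ofReal_lt_top

lemma exp_lintegral_lt_top (hB : 1 ≤ B)
    (hm0 : ∀ n, 0 ≤ m n) (hg : ∀ n, m n ≤ B ^ n * ((n.factorial : ℝ))^2)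
    (hτ0 : ∀ᵐ u ∂τ, 0 ≤ u)
    (hmom : ∀ n, ∫⁻ u, ENNReal.ofReal (u ^ (2*n)) ∂τ = ENNReal.ofReal (m n)) :
    ∫⁻ u, ENNReal.ofReal (Real.exp ((2*B)⁻¹ * u)) ∂τ < ⊤ := by
  have hker : ∀ u : ℝ, 0 ≤ u → ENNReal.ofReal (Real.exp ((2*B)⁻¹ * u))
      = ∑' k : ℕ, ENNReal.ofReal ((2*B)⁻¹ ^ k / (k.factorial : ℝ)) * ENNReal.ofReal (u ^ k) := by
    intro u hu
    have hB0 : (0:ℝ) < B := lt_of_lt_of_le one_pos hB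
    have he0 : (0:ℝ) ≤ (2*B)⁻¹ := by positivity
    have hsum : Summable (fun k : ℕ => ((2*B)⁻¹ * u) ^ k / (k.factorial : ℝ)) :=
      Real.summable_pow_div_factorial _
    have hexp : Real.exp ((2*B)⁻¹ * u) = ∑' k : ℕ, ((2*B)⁻¹ * u) ^ k / (k.factorial : ℝ) := by
      rw [Real.exp_eq_exp_ℝ, NormedSpace.exp_eq_tsum_div]
    rw [hexp, ENNReal.ofReal_tsum_of_nonneg (fun k => by positivity) hsum]
    congr 1
    funext k
    rw [← ENNReal.ofReal_mul (by positivity)]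
    congr 1
    rw [mul_pow]
    ring
  have hmeas : ∀ k : ℕ, AEMeasurable
      (fun u : ℝ => ENNReal.ofReal ((2*B)⁻¹ ^ k / (k.factorial : ℝ)) * ENNReal.ofReal (u ^ k)) τ := by
    intro k
    exact (((measurable_id.pow_const k).ennreal_ofReal).const_mul _).aemeasurable
  calc ∫⁻ u, ENNReal.ofReal (Real.exp ((2*B)⁻¹ * u)) ∂τ
      = ∫⁻ u, ∑' k : ℕ, ENNReal.ofReal ((2*B)⁻¹ ^ k / (k.factorial : ℝ))
          * ENNReal.ofReal (u ^ k) ∂τ := by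
        refine lintegral_congr_ae ?_
        filter_upwards [hτ0] with u hu using hker u hu
    _ = ∑' k : ℕ, ∫⁻ u, ENNReal.ofReal ((2*B)⁻¹ ^ k / (k.factorial : ℝ))
          * ENNReal.ofReal (u ^ k) ∂τ := lintegral_tsum hmeas
    _ = ∑' k : ℕ, ENNReal.ofReal ((2*B)⁻¹ ^ k / (k.factorial : ℝ))
          * ∫⁻ u, ENNReal.ofReal (u ^ k) ∂τ := by
        refine tsum_congr fun k => ?_
        exact lintegral_const_mul' _ _ ENNReal.ofReal_ne_top
    _ < ⊤ := series_bound hB hm0 hg hτ0 hmom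

lemma integrable_exp_eps (hB : 1 ≤ B)
    (hm0 : ∀ n, 0 ≤ m n) (hg : ∀ n, m n ≤ B ^ n * ((n.factorial : ℝ))^2)
    (hτ0 : ∀ᵐ u ∂τ, 0 ≤ u)
    (hmom : ∀ n, ∫⁻ u, ENNReal.ofReal (u ^ (2*n)) ∂τ = ENNReal.ofReal (m n)) :
    Integrable (fun u : ℝ => Real.exp ((2*B)⁻¹ * u)) τ := by
  refine ⟨(Real.continuous_exp.comp (continuous_const.mul continuous_id)).aestronglyMeasurable, ?_⟩
  rw [hasFiniteIntegral_iff_ofReal (Eventually.of_forall fun u => (Real.exp_pos _).le)]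
  exact exp_lintegral_lt_top hB hm0 hg hτ0 hmom

lemma re_z_mul_ofReal (z : ℂ) (u : ℝ) : (z * (u:ℂ)).re = z.re * u := by
  simp [Complex.mul_re]

lemma integrable_cexp (hB : 1 ≤ B)
    (hm0 : ∀ n, 0 ≤ m n) (hg : ∀ n, m n ≤ B ^ n * ((n.factorial : ℝ))^2)
    (hτ0 : ∀ᵐ u ∂τ, 0 ≤ u)
    (hmom : ∀ n, ∫⁻ u, ENNReal.ofReal (u ^ (2*n)) ∂τ = ENNReal.ofReal (m n))
    {z : ℂ} (hz : z.re ≤ (2*B)⁻¹) :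
    Integrable (fun u : ℝ => Complex.exp (z * u)) τ := by
  refine (integrable_exp_eps hB hm0 hg hτ0 hmom).mono' ?_ ?_
  · exact (Complex.continuous_exp.comp
      (continuous_const.mul Complex.continuous_ofReal)).aestronglyMeasurable
  · filter_upwards [hτ0] with u hu
    rw [Complex.norm_exp, re_z_mul_ofReal]
    exact Real.exp_le_exp.2 (mul_le_mul_of_nonneg_right hz hu)

lemma lap_norm_le (hB : 1 ≤ B)
    (hm0 : ∀ n, 0 ≤ m n) (hg : ∀ n, m n ≤ B ^ n * ((n.factorial : ℝ))^2)
    (hτ0 : ∀ᵐ u ∂τ, 0 ≤ u)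
    (hmom : ∀ n, ∫⁻ u, ENNReal.ofReal (u ^ (2*n)) ∂τ = ENNReal.ofReal (m n))
    {z : ℂ} (hz : z.re ≤ (2*B)⁻¹) :
    ‖lap τ z‖ ≤ ∫ u, Real.exp ((2*B)⁻¹ * u) ∂τ := by
  refine (norm_integral_le_integral_norm _).trans ?_
  refine integral_mono_ae (integrable_cexp hB hm0 hg hτ0 hmom hz).norm
    (integrable_exp_eps hB hm0 hg hτ0 hmom) ?_
  filter_upwards [hτ0] with u hu
  rw [Complex.norm_exp, re_z_mul_ofReal]
  exact Real.exp_le_exp.2 (mul_le_mul_of_nonneg_right hz hu)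

lemma lap_differentiableOn (hB : 1 ≤ B)
    (hm0 : ∀ n, 0 ≤ m n) (hg : ∀ n, m n ≤ B ^ n * ((n.factorial : ℝ))^2)
    (hτ0 : ∀ᵐ u ∂τ, 0 ≤ u)
    (hmom : ∀ n, ∫⁻ u, ENNReal.ofReal (u ^ (2*n)) ∂τ = ENNReal.ofReal (m n)) :
    DifferentiableOn ℂ (lap τ) {z : ℂ | z.re < (2*B)⁻¹} := by
  set e : ℝ := (2*B)⁻¹ with he
  intro z₀ hz₀
  have hz₀' : z₀.re < e := hz₀
  set δ : ℝ := (e - z₀.re)/2 with hδdef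
  have hδ : 0 < δ := by simp only [hδdef]; linarith
  set cc : ℝ := z₀.re + δ with hcc
  have hce : cc < e := by simp only [hcc, hδdef]; linarith
  have hDer : HasDerivAt (fun z => ∫ u, Complex.exp (z * u) ∂τ)
      (∫ u, Complex.exp (z₀ * u) * u ∂τ) z₀ := by
    have key := hasDerivAt_integral_of_dominated_loc_of_deriv_le (μ := τ)
      (F := fun (z : ℂ) (u : ℝ) => Complex.exp (z * u))
      (F' := fun (z : ℂ) (u : ℝ) => Complex.exp (z * u) * u)
      (x₀ := z₀) (bound := fun u => (e - cc)⁻¹ * Real.exp (e * u)) (Metric.ball_mem_nhds z₀ hδ)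
      ?_ ?_ ?_ ?_ ?_ ?_
    · exact key.2
    · exact Eventually.of_forall fun z => (Complex.continuous_exp.comp
        (continuous_const.mul Complex.continuous_ofReal)).aestronglyMeasurable
    · exact integrable_cexp hB hm0 hg hτ0 hmom hz₀'.le
    · exact ((Complex.continuous_exp.comp
        (continuous_const.mul Complex.continuous_ofReal)).mul
          Complex.continuous_ofReal).aestronglyMeasurable
    · filter_upwards [hτ0] with u hu
      intro z hzball
      have hzre : z.re ≤ cc := by
        have h1 : (z - z₀).re ≤ |(z - z₀).re| := le_abs_self _
        have h2 : |(z - z₀).re| ≤ ‖z - z₀‖ := Complex.abs_re_le_norm _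
        have h3 : ‖z - z₀‖ < δ := by
          rw [← Complex.dist_eq]
          exact Metric.mem_ball.mp hzball
        have : z.re - z₀.re ≤ δ := by
          have := h1.trans (h2.trans h3.le)
          simpa [Complex.sub_re] using this
        simp only [hcc]; linarith
      rw [norm_mul, Complex.norm_exp, re_z_mul_ofReal,
        Complex.norm_real, Real.norm_eq_abs, abs_of_nonneg hu]
      have step1 : Real.exp (z.re * u) ≤ Real.exp (cc * u) :=
        Real.exp_le_exp.2 (mul_le_mul_of_nonneg_right hzre hu)
      have hec : 0 < e - cc := by linarith
      have step2 : u ≤ (e - cc)⁻¹ * Real.exp ((e - cc) * u) := by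
        have h4 : (e - cc) * u ≤ Real.exp ((e - cc) * u) := by
          have := Real.add_one_le_exp ((e - cc) * u)
          linarith
        calc u = (e - cc)⁻¹ * ((e - cc) * u) := by field_simp
          _ ≤ (e - cc)⁻¹ * Real.exp ((e - cc) * u) := by
            exact mul_le_mul_of_nonneg_left h4 (by positivity)
      calc Real.exp (z.re * u) * u ≤ Real.exp (cc * u) * ((e - cc)⁻¹ * Real.exp ((e - cc) * u)) := by
            refine mul_le_mul step1 step2 hu (by positivity)
        _ = (e - cc)⁻¹ * Real.exp (e * u) := by
            rw [show Real.exp (cc*u) * ((e - cc)⁻¹ * Real.exp ((e - cc)*u))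
                = (e - cc)⁻¹ * (Real.exp (cc*u) * Real.exp ((e - cc)*u)) from by ring,
              ← Real.exp_add]
            congr 2
            ring
    · exact (integrable_exp_eps hB hm0 hg hτ0 hmom).const_mul _
    · refine Eventually.of_forall fun u => fun z _ => ?_
      simpa using ((hasDerivAt_id z).mul_const ((u:ℝ):ℂ)).cexp
  exact hDer.differentiableAt.differentiableWithinAt

lemma lap_conj (τ : Measure ℝ) (z : ℂ) :
    lap τ ((starRingEnd ℂ) z) = (starRingEnd ℂ) (lap τ z) := by
  rw [lap, lap, ← integral_conj]
  congr 1
  funext u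
  rw [← Complex.exp_conj, map_mul, Complex.conj_ofReal]

lemma lap_add_neg (hB : 1 ≤ B)
    (hm0 : ∀ n, 0 ≤ m n) (hg : ∀ n, m n ≤ B ^ n * ((n.factorial : ℝ))^2)
    (hτ0 : ∀ᵐ u ∂τ, 0 ≤ u)
    (hmom : ∀ n, ∫⁻ u, ENNReal.ofReal (u ^ (2*n)) ∂τ = ENNReal.ofReal (m n))
    (s : ℝ) (hs : |s| ≤ (2*B)⁻¹) :
    lap τ s + lap τ (-(s:ℂ))
      = ∑' k : ℕ, (if Even k then ((2 * s^k / (k.factorial:ℝ) * m (k/2) : ℝ) : ℂ) else 0) := by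
  set e : ℝ := (2*B)⁻¹ with he
  have hs1 : ((s:ℂ)).re ≤ e := by simpa using (le_abs_self s).trans hs
  have hs2 : ((-(s:ℂ))).re ≤ e := by
    have := (neg_le_abs s).trans hs
    simpa using this
  have hi1 := integrable_cexp hB hm0 hg hτ0 hmom hs1
  have hi2 := integrable_cexp hB hm0 hg hτ0 hmom hs2
  set f : ℕ → ℝ → ℂ := fun k u => (((s:ℂ)*u)^k + ((-(s:ℂ))*u)^k)/((k.factorial : ℂ)) with hf
  have hmeasf : ∀ k, AEStronglyMeasurable (f k) τ := by
    intro k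
    apply Continuous.aestronglyMeasurable
    exact (((continuous_const.mul Complex.continuous_ofReal).pow k).add
      (((continuous_const.mul Complex.continuous_ofReal)).pow k)).div_const _
  have hnormk : ∀ k, (∫⁻ u, ‖f k u‖₊ ∂τ)
      ≤ 2 * (ENNReal.ofReal (e ^ k / (k.factorial : ℝ))
          * ∫⁻ u, ENNReal.ofReal (u ^ k) ∂τ) := by
    intro k
    have he0 : (0:ℝ) ≤ e := by
      have hB0 : (0:ℝ) < B := lt_of_lt_of_le one_pos hB
      positivity
    have hptw : ∀ᵐ u ∂τ, (‖f k u‖₊ : ℝ≥0∞)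
        ≤ ENNReal.ofReal (2 * (e ^ k / (k.factorial:ℝ))) * ENNReal.ofReal (u ^ k) := by
      filter_upwards [hτ0] with u hu
      rw [← enorm_eq_nnnorm, ← ofReal_norm_eq_enorm,
        ← ENNReal.ofReal_mul (by positivity)]
      refine ENNReal.ofReal_le_ofReal ?_
      have hn1 : ‖((s:ℂ)*(u:ℂ))^k‖ ≤ (e*u)^k := by
        rw [norm_pow, norm_mul, Complex.norm_real, Complex.norm_real, Real.norm_eq_abs,
          Real.norm_eq_abs, abs_of_nonneg hu]
        exact pow_le_pow_left₀ (by positivity) (mul_le_mul_of_nonneg_right hs hu) k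
      have hn2 : ‖((-(s:ℂ))*(u:ℂ))^k‖ ≤ (e*u)^k := by
        rw [norm_pow, norm_mul, norm_neg, Complex.norm_real, Complex.norm_real,
          Real.norm_eq_abs, Real.norm_eq_abs, abs_of_nonneg hu]
        exact pow_le_pow_left₀ (by positivity) (mul_le_mul_of_nonneg_right hs hu) k
      have hfkn : (0:ℝ) < (k.factorial : ℝ) := by exact_mod_cast Nat.factorial_pos k
      calc ‖f k u‖ = ‖((s:ℂ)*(u:ℂ))^k + ((-(s:ℂ))*(u:ℂ))^k‖ / (k.factorial : ℝ) := by
            rw [hf]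
            simp only [norm_div]
            congr 1
            rw [Complex.norm_natCast]
        _ ≤ ((e*u)^k + (e*u)^k) / (k.factorial : ℝ) := by
            gcongr
            exact (norm_add_le _ _).trans (add_le_add hn1 hn2)
        _ = 2 * (e ^ k / (k.factorial:ℝ)) * u ^ k := by
            rw [mul_pow]
            ring
    calc (∫⁻ u, ‖f k u‖₊ ∂τ)
        ≤ ∫⁻ u, ENNReal.ofReal (2 * (e ^ k / (k.factorial:ℝ)))
            * ENNReal.ofReal (u ^ k) ∂τ := lintegral_mono_ae hptw
      _ = ENNReal.ofReal (2 * (e ^ k / (k.factorial:ℝ)))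
            * ∫⁻ u, ENNReal.ofReal (u ^ k) ∂τ :=
          lintegral_const_mul' _ _ ENNReal.ofReal_ne_top
      _ = 2 * (ENNReal.ofReal (e ^ k / (k.factorial : ℝ))
            * ∫⁻ u, ENNReal.ofReal (u ^ k) ∂τ) := by
          rw [ENNReal.ofReal_mul (by norm_num : (0:ℝ) ≤ 2), ENNReal.ofReal_ofNat, mul_assoc]
  have hnorm : (∑' k, ∫⁻ u, ‖f k u‖₊ ∂τ) ≠ ⊤ := by
    refine ne_top_of_le_ne_top ?_ (ENNReal.tsum_le_tsum hnormk)
    rw [ENNReal.tsum_mul_left]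
    exact ENNReal.mul_ne_top (by norm_num)
      (series_bound hB hm0 hg hτ0 hmom).ne
  have hsum_int : ∫ u, (∑' k, f k u) ∂τ = ∑' k, ∫ u, f k u ∂τ :=
    integral_tsum hmeasf hnorm
  have hpt : ∀ u : ℝ, (∑' k, f k u)
      = Complex.exp ((s:ℂ)*u) + Complex.exp ((-(s:ℂ))*u) := by
    intro u
    have s1 : Summable (fun k : ℕ => ((s:ℂ)*(u:ℂ))^k / (k.factorial:ℂ)) :=
      NormedSpace.expSeries_div_summable _
    have s2 : Summable (fun k : ℕ => ((-(s:ℂ))*(u:ℂ))^k / (k.factorial:ℂ)) :=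
      NormedSpace.expSeries_div_summable _
    have e1 : Complex.exp ((s:ℂ)*u) = ∑' k : ℕ, ((s:ℂ)*(u:ℂ))^k / (k.factorial:ℂ) := by
      rw [Complex.exp_eq_exp_ℂ, NormedSpace.exp_eq_tsum_div]
    have e2 : Complex.exp ((-(s:ℂ))*u) = ∑' k : ℕ, ((-(s:ℂ))*(u:ℂ))^k / (k.factorial:ℂ) := by
      rw [Complex.exp_eq_exp_ℂ, NormedSpace.exp_eq_tsum_div]
    rw [e1, e2, ← Summable.tsum_add s1 s2]
    refine tsum_congr fun k => ?_
    simp only [hf]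
    rw [add_div]
  have hterm : ∀ k : ℕ, ∫ u, f k u ∂τ
      = (if Even k then ((2 * s^k / (k.factorial:ℝ) * m (k/2) : ℝ) : ℂ) else 0) := by
    intro k
    rcases Nat.even_or_odd k with hev | hodd
    · rw [if_pos hev]
      have hfk : ∀ u : ℝ, f k u = (((2 * s^k / (k.factorial:ℝ)) * u ^ k : ℝ) : ℂ) := by
        intro u
        simp only [hf]
        have hneg : ((-(s:ℂ))*(u:ℂ))^k = ((s:ℂ)*(u:ℂ))^k := by
          rw [show (-(s:ℂ))*(u:ℂ) = -((s:ℂ)*(u:ℂ)) from by ring, hev.neg_pow]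
        rw [hneg]
        push_cast
        ring
      have hint_pow : ∫ u, u ^ k ∂τ = m (k/2) := by
        have hk2 : 2 * (k/2) = k := Nat.two_mul_div_two_of_even hev
        have hpos : ∫ u, u^k ∂τ = (∫⁻ u, ENNReal.ofReal (u^k) ∂τ).toReal := by
          refine integral_eq_lintegral_of_nonneg_ae ?_
            ((measurable_id.pow_const k).aestronglyMeasurable)
          filter_upwards [hτ0] with u hu using pow_nonneg hu k
        have hmm := hmom (k/2)
        rw [hk2] at hmm
        rw [hpos, hmm, ENNReal.toReal_ofReal (hm0 _)]
      calc ∫ u, f k u ∂τ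
          = ∫ u, (((2 * s^k / (k.factorial:ℝ)) * u ^ k : ℝ) : ℂ) ∂τ :=
            integral_congr_ae (Eventually.of_forall fun u => hfk u)
        _ = (((∫ u, (2 * s^k / (k.factorial:ℝ)) * u ^ k ∂τ : ℝ)) : ℂ) := integral_ofReal
        _ = ((2 * s^k / (k.factorial:ℝ) * m (k/2) : ℝ) : ℂ) := by
            rw [integral_const_mul, hint_pow]
    · rw [if_neg (Nat.not_even_iff_odd.mpr hodd)]
      have hz : ∀ u : ℝ, f k u = 0 := by
        intro u
        simp only [hf]
        have hneg : ((-(s:ℂ))*(u:ℂ))^k = -(((s:ℂ)*(u:ℂ))^k) := by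
          rw [show (-(s:ℂ))*(u:ℂ) = -((s:ℂ)*(u:ℂ)) from by ring, hodd.neg_pow]
        rw [hneg]
        simp
      rw [integral_congr_ae (Eventually.of_forall hz)]
      simp
  calc lap τ s + lap τ (-(s:ℂ))
      = ∫ u, (Complex.exp ((s:ℂ)*u) + Complex.exp ((-(s:ℂ))*u)) ∂τ :=
        (integral_add hi1 hi2).symm
    _ = ∫ u, (∑' k, f k u) ∂τ :=
        integral_congr_ae (Eventually.of_forall fun u => (hpt u).symm)
    _ = ∑' k, ∫ u, f k u ∂τ := hsum_int
    _ = ∑' k : ℕ, (if Even k then ((2 * s^k / (k.factorial:ℝ) * m (k/2) : ℝ) : ℂ) else 0) :=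
        tsum_congr hterm

lemma lap_eq_on_nonpos {τ₁ τ₂ : Measure ℝ} (hB : 1 ≤ B)
    (hm0 : ∀ n, 0 ≤ m n) (hg : ∀ n, m n ≤ B ^ n * ((n.factorial : ℝ))^2)
    (hτ1 : ∀ᵐ u ∂τ₁, 0 ≤ u) (hτ2 : ∀ᵐ u ∂τ₂, 0 ≤ u)
    (hmom1 : ∀ n, ∫⁻ u, ENNReal.ofReal (u ^ (2*n)) ∂τ₁ = ENNReal.ofReal (m n))
    (hmom2 : ∀ n, ∫⁻ u, ENNReal.ofReal (u ^ (2*n)) ∂τ₂ = ENNReal.ofReal (m n))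
    (r : ℝ) (hr : r ≤ 0) : lap τ₁ (r:ℂ) = lap τ₂ (r:ℂ) := by
  have hB0 : (0:ℝ) < B := lt_of_lt_of_le one_pos hB
  set e : ℝ := (2*B)⁻¹ with he
  have he0 : 0 < e := by positivity
  set D : ℂ → ℂ := fun z => lap τ₁ z - lap τ₂ z with hD
  set Ω : Set ℂ := {z : ℂ | z.re < e} with hΩ
  have hΩopen : IsOpen Ω := isOpen_lt Complex.continuous_re continuous_const
  have hDdiff : DifferentiableOn ℂ D Ω :=
    (lap_differentiableOn hB hm0 hg hτ1 hmom1).sub (lap_differentiableOn hB hm0 hg hτ2 hmom2)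
  have hDanalytic : AnalyticOnNhd ℂ D Ω := hDdiff.analyticOnNhd hΩopen
  have hDconj : ∀ z : ℂ, D ((starRingEnd ℂ) z) = (starRingEnd ℂ) (D z) := by
    intro z
    simp only [hD]
    rw [lap_conj, lap_conj, map_sub]
  have hDsmall : ∀ s : ℝ, |s| ≤ e → D (s:ℂ) + D (-(s:ℂ)) = 0 := by
    intro s hs
    have h1 := lap_add_neg (τ := τ₁) hB hm0 hg hτ1 hmom1 s hs
    have h2 := lap_add_neg (τ := τ₂) hB hm0 hg hτ2 hmom2 s hs
    simp only [hD]
    have : lap τ₁ (s:ℂ) - lap τ₂ (s:ℂ) + (lap τ₁ (-(s:ℂ)) - lap τ₂ (-(s:ℂ)))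
        = (lap τ₁ (s:ℂ) + lap τ₁ (-(s:ℂ))) - (lap τ₂ (s:ℂ) + lap τ₂ (-(s:ℂ))) := by ring
    rw [this, h1, h2, sub_self]
  set S : Set ℂ := Complex.re ⁻¹' (Ioo (-e) e) with hS
  have hSpre : IsPreconnected S := by
    refine Convex.isPreconnected ?_
    exact (convex_Ioo (-e) e).linear_preimage Complex.reLm
  have hE : AnalyticOnNhd ℂ (fun z => D z + D (-z)) S := by
    have hsub : S ⊆ Ω := fun z hz => hz.2
    have hmapsto : Set.MapsTo (fun z : ℂ => -z) S Ω := by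
      intro z hz
      have h1 : -e < z.re := hz.1
      show (-z).re < e
      rw [Complex.neg_re]
      linarith
    have hneg : AnalyticOnNhd ℂ (fun z : ℂ => -z) S := analyticOnNhd_id.neg
    exact (hDanalytic.mono hsub).add (hDanalytic.comp hneg hmapsto)
  have hE0 : EqOn (fun z => D z + D (-z)) 0 S := by
    refine hE.eqOn_zero_of_preconnected_of_frequently_eq_zero hSpre (z₀ := 0) ?_ ?_
    · show (0:ℂ).re ∈ Ioo (-e) e
      simpa using he0
    · rw [Filter.frequently_iff]
      intro U hU
      rw [mem_nhdsWithin] at hU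
      obtain ⟨V, hVopen, hV0, hVU⟩ := hU
      obtain ⟨ρ, hρ0, hball⟩ := Metric.isOpen_iff.mp hVopen 0 hV0
      set x : ℝ := min (e/2) (ρ/2) with hx
      have hx0 : 0 < x := lt_min (by linarith) (by linarith)
      refine ⟨(x:ℂ), hVU ⟨hball ?_, ?_⟩, ?_⟩
      · rw [Metric.mem_ball, dist_zero_right]
        rw [Complex.norm_real, Real.norm_eq_abs, abs_of_pos hx0]
        exact lt_of_le_of_lt (min_le_right _ _) (by linarith)
      · simp only [mem_compl_iff, mem_singleton_iff]
        exact_mod_cast hx0.ne'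
      · have := hDsmall x (by
          rw [abs_of_pos hx0]
          exact le_trans (min_le_left _ _) (by linarith))
        simpa using this
  have haxis : ∀ t : ℝ, (D ((t:ℂ) * Complex.I)).re = 0 := by
    intro t
    have h1 : ((t:ℂ) * Complex.I) ∈ S := by
      show ((t:ℂ) * Complex.I).re ∈ Ioo (-e) e
      have : ((t:ℂ) * Complex.I).re = 0 := by simp
      rw [this]
      exact ⟨by linarith, he0⟩
    have h2 := hE0 h1
    simp only [Pi.zero_apply] at h2
    have h3 : (starRingEnd ℂ) ((t:ℂ) * Complex.I) = -((t:ℂ) * Complex.I) := by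
      rw [map_mul, Complex.conj_ofReal, Complex.conj_I]
      ring
    have h4 : D (-((t:ℂ) * Complex.I)) = (starRingEnd ℂ) (D ((t:ℂ) * Complex.I)) := by
      rw [← h3, hDconj]
    rw [h4] at h2
    have h5 := congrArg Complex.re h2
    simp only [Complex.add_re, Complex.conj_re, Complex.zero_re] at h5
    linarith
  set M : ℝ := (∫ u, Real.exp (e * u) ∂τ₁) + ∫ u, Real.exp (e * u) ∂τ₂ with hM
  have hDb : ∀ z : ℂ, z.re ≤ e → ‖D z‖ ≤ M := by
    intro z hz
    refine (norm_sub_le _ _).trans ?_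
    exact add_le_add (lap_norm_le hB hm0 hg hτ1 hmom1 hz) (lap_norm_le hB hm0 hg hτ2 hmom2 hz)
  have hDneg : DifferentiableOn ℂ (fun z => D (-z)) {z : ℂ | 0 ≤ z.re} := by
    refine DifferentiableOn.comp hDdiff (differentiable_neg.differentiableOn) ?_
    intro z hz
    have : (0:ℝ) ≤ z.re := hz
    show (-z).re < e
    rw [Complex.neg_re]
    linarith
  have key : ∀ (A : ℂ → ℂ), DifferentiableOn ℂ A {z : ℂ | 0 ≤ z.re} →
      (∀ z : ℂ, 0 ≤ z.re → ‖A z‖ ≤ M) → (∀ t : ℝ, (A ((t:ℂ) * Complex.I)).re = 0) →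
      ∀ z : ℂ, 0 ≤ z.re → (A z).re ≤ 0 := by
    intro A hA hAb hAax z hz
    have h := PhragmenLindelof.right_half_plane_of_bounded_on_real
      (f := fun z => Complex.exp (A z)) (C := 1) (z := z) ?_ ?_ ?_ ?_ hz
    · rw [Complex.norm_exp] at h
      exact Real.exp_le_one_iff.mp h
    · refine DifferentiableOn.diffContOnCl ?_
      rw [Complex.closure_setOf_lt_re]
      exact hA.cexp
    · refine ⟨1, one_lt_two, 0, ?_⟩
      refine Asymptotics.IsBigO.of_bound (Real.exp M) ?_
      rw [Filter.eventually_inf_principal]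
      refine Eventually.of_forall fun w hw => ?_
      have h1 : ‖Complex.exp (A w)‖ ≤ Real.exp M := by
        rw [Complex.norm_exp]
        refine Real.exp_le_exp.2 ?_
        exact (Complex.re_le_norm _).trans (hAb w (le_of_lt hw))
      have h2 : ‖Real.exp (0 * ‖w‖ ^ (1:ℝ))‖ = 1 := by
        simp
      rw [h2, mul_one]
      exact h1
    · refine ⟨Real.exp M, ?_⟩
      rw [Filter.eventually_map]
      filter_upwards [Filter.eventually_ge_atTop (0:ℝ)] with x hx
      rw [Complex.norm_exp]
      refine Real.exp_le_exp.2 ?_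
      refine (Complex.re_le_norm _).trans ?_
      exact hAb _ (by simpa using hx)
    · intro x
      rw [Complex.norm_exp, hAax x, Real.exp_zero]
  have hREzero : ∀ w : ℂ, w.re ≤ 0 → (D w).re = 0 := by
    intro w hw
    have hb1 : ∀ z : ℂ, 0 ≤ z.re → ‖D (-z)‖ ≤ M := by
      intro z hz
      refine hDb _ ?_
      rw [Complex.neg_re]
      linarith
    have hax1 : ∀ t : ℝ, (D (-((t:ℂ) * Complex.I))).re = 0 := by
      intro t
      have : -((t:ℂ) * Complex.I) = (((-t : ℝ):ℂ)) * Complex.I := by push_cast; ring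
      rw [this]
      exact haxis (-t)
    have h1 := key (fun z => D (-z)) hDneg hb1 hax1 (-w) (by rw [Complex.neg_re]; linarith)
    have h2 := key (fun z => -D (-z)) hDneg.neg
      (fun z hz => by rw [norm_neg]; exact hb1 z hz)
      (fun t => by rw [Complex.neg_re, hax1 t, neg_zero]) (-w)
      (by rw [Complex.neg_re]; linarith)
    simp only [neg_neg, Complex.neg_re] at h1 h2
    linarith
  have hre0 : (D (r:ℂ)).re = 0 := hREzero _ (by simpa using hr)
  have him0 : (D (r:ℂ)).im = 0 := by
    have hc := hDconj (r:ℂ)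
    rw [Complex.conj_ofReal] at hc
    have := congrArg Complex.im hc
    simp only [Complex.conj_im] at this
    linarith
  have hD0 : D (r:ℂ) = 0 := by
    apply Complex.ext
    · simpa using hre0
    · simpa using him0
  have := sub_eq_zero.mp hD0
  exact this

lemma lap_real (τ : Measure ℝ) (c : ℝ) :
    lap τ ((c:ℝ):ℂ) = ((∫ u, Real.exp (c*u) ∂τ : ℝ) : ℂ) := by
  rw [lap]
  have hpt : ∀ u : ℝ, Complex.exp ((c:ℂ) * u) = ((Real.exp (c*u) : ℝ) : ℂ) := by
    intro u
    rw [← Complex.ofReal_mul, Complex.ofReal_exp]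
  rw [integral_congr_ae (Eventually.of_forall hpt)]
  exact integral_ofReal

end Core

lemma ae_nonneg_of_null_Iio {ρ : Measure ℝ} (hn : ρ (Set.Iio 0) = 0) :
    ∀ᵐ x ∂ρ, 0 ≤ x := by
  rw [ae_iff]
  convert hn using 2
  ext x
  simp [not_le]

lemma key_determinate (m : ℕ → ℝ) (B : ℝ) (hB : 1 ≤ B) (hm0 : ∀ n, 0 ≤ m n)
    (hg : ∀ n, m n ≤ B ^ n * ((n.factorial : ℝ))^2)
    (ρ₁ ρ₂ : Measure ℝ) (p₁ : IsProbabilityMeasure ρ₁) (p₂ : IsProbabilityMeasure ρ₂)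
    (hn₁ : ρ₁ (Set.Iio 0) = 0) (hn₂ : ρ₂ (Set.Iio 0) = 0)
    (hq₁ : ∀ n : ℕ, ∫⁻ x, ENNReal.ofReal (x ^ n) ∂ρ₁ = ENNReal.ofReal (m n))
    (hq₂ : ∀ n : ℕ, ∫⁻ x, ENNReal.ofReal (x ^ n) ∂ρ₂ = ENNReal.ofReal (m n)) :
    ρ₁ = ρ₂ := by
  have hsqrt_meas : Measurable Real.sqrt := Real.continuous_sqrt.measurable
  set τ₁ : Measure ℝ := Measure.map Real.sqrt ρ₁ with hτ₁def
  set τ₂ : Measure ℝ := Measure.map Real.sqrt ρ₂ with hτ₂def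
  have hτ0₁ : ∀ᵐ u ∂τ₁, 0 ≤ u := by
    rw [hτ₁def, ae_map_iff hsqrt_meas.aemeasurable (measurableSet_Ici : MeasurableSet (Ici (0:ℝ)))]
    exact Eventually.of_forall fun x => Real.sqrt_nonneg x
  have hτ0₂ : ∀ᵐ u ∂τ₂, 0 ≤ u := by
    rw [hτ₂def, ae_map_iff hsqrt_meas.aemeasurable (measurableSet_Ici : MeasurableSet (Ici (0:ℝ)))]
    exact Eventually.of_forall fun x => Real.sqrt_nonneg x
  have hmomτ : ∀ (ρ : Measure ℝ), ρ (Set.Iio 0) = 0 →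
      (∀ n : ℕ, ∫⁻ x, ENNReal.ofReal (x ^ n) ∂ρ = ENNReal.ofReal (m n)) →
      ∀ n : ℕ, ∫⁻ u, ENNReal.ofReal (u ^ (2*n)) ∂(Measure.map Real.sqrt ρ)
        = ENNReal.ofReal (m n) := by
    intro ρ hn hq n
    have hfm : Measurable fun u : ℝ => ENNReal.ofReal (u ^ (2*n)) :=
      (measurable_id.pow_const _).ennreal_ofReal
    rw [lintegral_map hfm hsqrt_meas]
    have hae : ∀ᵐ x ∂ρ, ENNReal.ofReal (Real.sqrt x ^ (2*n)) = ENNReal.ofReal (x ^ n) := by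
      filter_upwards [ae_nonneg_of_null_Iio hn] with x hx
      rw [pow_mul, Real.sq_sqrt hx]
    rw [lintegral_congr_ae hae, hq n]
  have hmomτ₁ := hmomτ ρ₁ hn₁ hq₁
  have hmomτ₂ := hmomτ ρ₂ hn₂ hq₂
  have hlap : ∀ n : ℕ, ∫ u, Real.exp (-(n:ℝ) * u) ∂τ₁ = ∫ u, Real.exp (-(n:ℝ) * u) ∂τ₂ := by
    intro n
    have h := lap_eq_on_nonpos hB hm0 hg hτ0₁ hτ0₂ hmomτ₁ hmomτ₂ (-(n:ℝ))
      (by simp)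
    rw [lap_real, lap_real] at h
    exact_mod_cast h
  set gexp : ℝ → ℝ := fun u => Real.exp (-u) with hgexp
  have hgm : Measurable gexp := (Real.continuous_exp.comp continuous_neg).measurable
  set κ₁ : Measure ℝ := Measure.map gexp τ₁ with hκ₁def
  set κ₂ : Measure ℝ := Measure.map gexp τ₂ with hκ₂def
  have hτp₁ : IsProbabilityMeasure τ₁ := Measure.isProbabilityMeasure_map hsqrt_meas.aemeasurable
  have hτp₂ : IsProbabilityMeasure τ₂ := Measure.isProbabilityMeasure_map hsqrt_meas.aemeasurable
  have hκp₁ : IsProbabilityMeasure κ₁ := Measure.isProbabilityMeasure_map hgm.aemeasurable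
  have hκp₂ : IsProbabilityMeasure κ₂ := Measure.isProbabilityMeasure_map hgm.aemeasurable
  have hκIcc : ∀ (τ : Measure ℝ), (∀ᵐ u ∂τ, 0 ≤ u) →
      ∀ᵐ y ∂(Measure.map gexp τ), y ∈ Set.Icc (0:ℝ) 1 := by
    intro τ hτ
    have hms : MeasurableSet {y : ℝ | y ∈ Set.Icc (0:ℝ) 1} := by
      rw [Set.setOf_mem_eq]
      exact measurableSet_Icc
    rw [ae_map_iff hgm.aemeasurable hms]
    filter_upwards [hτ] with u hu
    refine ⟨(Real.exp_pos _).le, ?_⟩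
    rw [hgexp]
    simp only
    rw [Real.exp_le_one_iff]
    linarith
  have hκmom : ∀ n : ℕ, ∫ y, y ^ n ∂κ₁ = ∫ y, y ^ n ∂κ₂ := by
    intro n
    have hmap : ∀ (τ : Measure ℝ), ∫ y, y ^ n ∂(Measure.map gexp τ)
        = ∫ u, Real.exp (-(n:ℝ) * u) ∂τ := by
      intro τ
      have hpm : AEStronglyMeasurable (fun y : ℝ => y ^ n) (Measure.map gexp τ) :=
        (measurable_id.pow_const n).aestronglyMeasurable
      rw [integral_map hgm.aemeasurable hpm]
      congr 1
      funext u
      rw [hgexp]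
      simp only
      rw [← Real.exp_nat_mul]
      congr 1
      ring
    rw [hmap, hmap, hlap n]
  have hκeq : κ₁ = κ₂ :=
    haus_unique hκp₁ hκp₂ (hκIcc τ₁ hτ0₁) (hκIcc τ₂ hτ0₂) hκmom
  set ginv : ℝ → ℝ := fun y => (Real.log y)^2 with hginv
  have hginvm : Measurable ginv := Real.measurable_log.pow_const 2
  have hrec : ∀ (ρ : Measure ℝ), ρ (Set.Iio 0) = 0 →
      Measure.map ginv (Measure.map gexp (Measure.map Real.sqrt ρ)) = ρ := by
    intro ρ hn
    rw [Measure.map_map hgm hsqrt_meas, Measure.map_map hginvm (hgm.comp hsqrt_meas)]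
    have hae : (ginv ∘ (gexp ∘ Real.sqrt)) =ᵐ[ρ] id := by
      filter_upwards [ae_nonneg_of_null_Iio hn] with x hx
      show ginv (gexp (Real.sqrt x)) = x
      rw [hginv, hgexp]
      simp only
      rw [Real.log_exp, neg_pow, Real.sq_sqrt hx]
      simp
    rw [Measure.map_congr hae, Measure.map_id]
  calc ρ₁ = Measure.map ginv κ₁ := (hrec ρ₁ hn₁).symm
    _ = Measure.map ginv κ₂ := by rw [hκeq]
    _ = ρ₂ := hrec ρ₂ hn₂


end BergAux

/-- If `limsup_{u→∞} u^{-β} φ(u) < ∞` with `β ≥ 0`, and `t > 0` with `t·β ≤ 2`,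
then the sequence `n ↦ (∏_{k=1}^n φ(k))^t` is Stieltjes moment determinate. In particular,
if `φ` is bounded on `[0,∞)` this holds for every `t > 0`. -/

theorem bergUrbanik_momentDeterminate_of_upperBound
    (φ : ℝ → ℝ) (hφ : IsBernstein φ) (hnz : BernsteinNonzero φ) :
    (∀ β : ℝ, 0 ≤ β → (∃ C : ℝ, ∀ᶠ u : ℝ in atTop, φ u ≤ C * u ^ β) →
      ∀ t : ℝ, 0 < t → t * β ≤ 2 → StieltjesDeterminate (bergSeq φ t)) ∧
    ((∃ C : ℝ, ∀ u : ℝ, 0 ≤ u → φ u ≤ C) →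
      ∀ t : ℝ, 0 < t → StieltjesDeterminate (bergSeq φ t)) := by
  have hpos : ∀ u : ℝ, 0 ≤ u → 0 ≤ φ u := by
    obtain ⟨R⟩ := hφ
    intro u hu
    rw [R.eq u hu]
    have h1 : 0 ≤ ∫ y, (1 - Real.exp (-(u*y))) ∂(R.μ) := by
      apply integral_nonneg_of_ae
      have hae : ∀ᵐ y ∂(R.μ), 0 < y := by
        rw [ae_iff]
        convert R.supp using 2
        ext y
        simp [not_lt]
      filter_upwards [hae] with y hy
      have h2 : Real.exp (-(u*y)) ≤ 1 := by
        rw [Real.exp_le_one_iff]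
        nlinarith
      have : (0:ℝ) ≤ 1 - Real.exp (-(u*y)) := by linarith
      exact this
    have hk := R.k_nonneg
    have hd := R.d_nonneg
    have := mul_nonneg hd hu
    linarith
  have main : ∀ β : ℝ, 0 ≤ β → (∃ C : ℝ, ∀ᶠ u : ℝ in atTop, φ u ≤ C * u ^ β) →
      ∀ t : ℝ, 0 < t → t * β ≤ 2 → StieltjesDeterminate (bergSeq φ t) := by
    rintro β hβ0 ⟨C, hC⟩ t ht htβ
    obtain ⟨a, ha⟩ := Filter.eventually_atTop.mp hC
    set N : ℕ := ⌈a⌉₊ with hN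
    set Mc : ℝ := ∑ k ∈ Finset.Icc 1 N, φ (k:ℝ) with hMc
    have hMc0 : 0 ≤ Mc := Finset.sum_nonneg fun k _ => hpos _ (Nat.cast_nonneg k)
    set C1 : ℝ := max C 0 + Mc + 1 with hC1
    have hC11 : 1 ≤ C1 := by
      have := le_max_right C 0
      simp only [hC1]
      linarith
    have hφk : ∀ k : ℕ, 1 ≤ k → φ (k:ℝ) ≤ C1 * (k:ℝ) ^ β := by
      intro k hk
      have hk1 : (1:ℝ) ≤ (k:ℝ) := by exact_mod_cast hk
      have hrp0 : (0:ℝ) ≤ (k:ℝ) ^ β := Real.rpow_nonneg (by linarith) β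
      have hrp1 : (1:ℝ) ≤ (k:ℝ) ^ β := by
        rw [← Real.rpow_zero (k:ℝ)]
        exact Real.rpow_le_rpow_of_exponent_le hk1 hβ0
      rcases le_or_gt a (k:ℝ) with hak | hak
      · calc φ (k:ℝ) ≤ C * (k:ℝ)^β := ha (k:ℝ) hak
          _ ≤ C1 * (k:ℝ)^β := by
              refine mul_le_mul_of_nonneg_right ?_ hrp0
              have := le_max_left C 0
              simp only [hC1]
              linarith
      · have hkN : k ≤ N := by
          have h1 : (k:ℝ) ≤ (N:ℝ) := le_trans hak.le (Nat.le_ceil a)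
          exact_mod_cast h1
        have hmem : k ∈ Finset.Icc 1 N := Finset.mem_Icc.mpr ⟨hk, hkN⟩
        have hle : φ (k:ℝ) ≤ Mc := by
          rw [hMc]
          exact Finset.single_le_sum (fun i _ => hpos _ (Nat.cast_nonneg i)) hmem
        calc φ (k:ℝ) ≤ Mc := hle
          _ = Mc * 1 := (mul_one _).symm
          _ ≤ C1 * (k:ℝ)^β := by
              refine mul_le_mul ?_ hrp1 one_pos.le (by linarith)
              have := le_max_right C 0
              simp only [hC1]
              linarith
    set B : ℝ := max (C1 ^ t) 1 with hBdef
    have hB1 : (1:ℝ) ≤ B := le_max_right _ _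
    have hfactnat : ∀ n : ℕ, (∏ i ∈ Finset.Icc 1 n, i) = n.factorial := by
      intro n
      induction n with
      | zero => simp
      | succ n ih =>
        rw [Finset.prod_Icc_succ_top (by omega), ih, Nat.factorial_succ]
        ring
    have hfact : ∀ n : ℕ, (∏ k ∈ Finset.Icc 1 n, (k:ℝ)) = (n.factorial : ℝ) := by
      intro n
      rw [← Nat.cast_prod, hfactnat n]
    have hbound : ∀ n : ℕ, bergSeq φ t n ≤ B ^ n * ((n.factorial:ℝ))^2 := by
      intro n
      rw [bergSeq]
      have hP0 : (0:ℝ) ≤ ∏ k ∈ Finset.Icc 1 n, φ (k:ℝ) :=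
        Finset.prod_nonneg fun k _ => hpos _ (Nat.cast_nonneg k)
      have h1 : (∏ k ∈ Finset.Icc 1 n, φ (k:ℝ)) ≤ ∏ k ∈ Finset.Icc 1 n, (C1 * (k:ℝ)^β) :=
        Finset.prod_le_prod (fun k _ => hpos _ (Nat.cast_nonneg k))
          (fun k hk => hφk k (Finset.mem_Icc.mp hk).1)
      have h2 : (∏ k ∈ Finset.Icc 1 n, φ (k:ℝ)) ^ t
          ≤ (∏ k ∈ Finset.Icc 1 n, (C1 * (k:ℝ)^β)) ^ t :=
        Real.rpow_le_rpow hP0 h1 ht.le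
      refine h2.trans ?_
      have hnn : ∀ k ∈ Finset.Icc 1 n, (0:ℝ) ≤ C1 * (k:ℝ)^β := by
        intro k hk
        have : (0:ℝ) ≤ (k:ℝ)^β := Real.rpow_nonneg (Nat.cast_nonneg k) β
        nlinarith
      rw [← Real.finset_prod_rpow _ _ hnn t]
      have hterm : ∀ k ∈ Finset.Icc 1 n, (C1 * (k:ℝ)^β) ^ t ≤ B * ((k:ℝ))^2 := by
        intro k hk
        have hk1 : (1:ℝ) ≤ (k:ℝ) := by exact_mod_cast (Finset.mem_Icc.mp hk).1
        have hrpnn : (0:ℝ) ≤ (k:ℝ)^β := Real.rpow_nonneg (by linarith) β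
        rw [Real.mul_rpow (by linarith) hrpnn, ← Real.rpow_natCast (k:ℝ) 2,
          ← Real.rpow_mul (by linarith)]
        refine mul_le_mul (le_max_left _ _) ?_ (Real.rpow_nonneg (by linarith) _) ?_
        · refine Real.rpow_le_rpow_of_exponent_le hk1 ?_
          push_cast
          linarith [htβ]
        · have : (0:ℝ) < B := lt_of_lt_of_le one_pos hB1
          linarith
      refine (Finset.prod_le_prod (fun k hk => Real.rpow_nonneg
        (hnn k hk) t) hterm).trans ?_
      rw [Finset.prod_mul_distrib, Finset.prod_const, Nat.card_Icc]
      simp only [Nat.add_sub_cancel]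
      rw [Finset.prod_pow, hfact n]
    intro ρ₁ ρ₂ hp₁ hp₂ h01 h02 hm₁ hm₂
    exact BergAux.key_determinate (bergSeq φ t) B hB1
      (fun n => Real.rpow_nonneg (Finset.prod_nonneg fun k _ => hpos _ (Nat.cast_nonneg k)) t)
      hbound ρ₁ ρ₂ hp₁ hp₂ h01 h02 hm₁ hm₂
  refine ⟨main, ?_⟩
  rintro ⟨C, hC⟩ t ht
  refine main 0 le_rfl ⟨C, ?_⟩ t ht (by simp)
  filter_upwards [Filter.eventually_ge_atTop (0:ℝ)] with u hu
  rw [Real.rpow_zero, mul_one]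
  exact hC u hu

end
end

section
/- Let φ be a nonzero Bernstein function (so φ is infinitely differentiable on (0,∞) with φ'(u) = d + ∫_{(0,∞)} y e^{−uy} μ(dy)). Define a(n) = ∑_{k=1}^n φ'(k)/φ(k) − log φ(n) and g(n) = ∑_{k=1}^n φ'(k)/φ(k) − log φ(n+1) for n ≥ 1. Then g is non-decreasing, a(n) − g(n) → 0 as n → ∞, both sequences converge to a common limit γ_φ, and γ_φ ∈ [−log φ(1), φ'(1)/φ(1) − log φ(1)]. -/
open MeasureTheory Filter Topology Set
open scoped ENNReal

noncomputable section

namespace BernsteinGammaAux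

variable {φ : ℝ → ℝ}

lemma ae_pos (R : BernsteinRep φ) : ∀ᵐ y ∂ R.μ, 0 < y := by
  rw [ae_iff]
  have h : {y : ℝ | ¬ 0 < y} = Set.Iic 0 := by ext y; simp [not_lt]
  rw [h]; exact R.supp

lemma integrable_aux (R : BernsteinRep φ) {u : ℝ} (hu : 0 ≤ u) :
    Integrable (fun y => 1 - Real.exp (-(u * y))) R.μ := by
  set C := max 1 u with hCdef
  have hC1 : (1:ℝ) ≤ C := le_max_left _ _
  have hCu : u ≤ C := le_max_right _ _
  have hC0 : (0:ℝ) ≤ C := le_trans zero_le_one hC1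
  have hg : Integrable (fun y => C * min 1 y) R.μ := by
    refine ⟨(continuous_const.mul (continuous_const.min continuous_id)).aestronglyMeasurable, ?_⟩
    rw [hasFiniteIntegral_iff_norm]
    have h1 : ∫⁻ y, ENNReal.ofReal ‖C * min 1 y‖ ∂ R.μ
        = ∫⁻ y, ENNReal.ofReal C * ENNReal.ofReal (min 1 y) ∂ R.μ := by
      refine lintegral_congr_ae ((ae_pos R).mono fun y hy => ?_)
      have hmin : 0 ≤ min 1 y := le_min zero_le_one hy.le
      show ENNReal.ofReal ‖C * min 1 y‖ = ENNReal.ofReal C * ENNReal.ofReal (min 1 y)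
      rw [Real.norm_eq_abs, abs_of_nonneg (mul_nonneg hC0 hmin), ENNReal.ofReal_mul hC0]
    rw [h1, lintegral_const_mul _
      (by fun_prop : Measurable fun y : ℝ => ENNReal.ofReal (min 1 y))]
    exact ENNReal.mul_lt_top ENNReal.ofReal_lt_top R.levy
  refine hg.mono' ((continuous_const.sub (Real.continuous_exp.comp
    (continuous_const.mul continuous_id).neg)).aestronglyMeasurable) ?_
  refine (ae_pos R).mono fun y hy => ?_
  have huy : 0 ≤ u * y := mul_nonneg hu hy.le
  have he1 : Real.exp (-(u * y)) ≤ 1 := by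
    have := Real.exp_le_exp.mpr (neg_nonpos.mpr huy)
    rwa [Real.exp_zero] at this
  have he2 : 1 - u * y ≤ Real.exp (-(u * y)) := by
    have := Real.add_one_le_exp (-(u * y)); linarith
  rw [Real.norm_eq_abs, abs_of_nonneg (by linarith)]
  rcases le_total y 1 with h | h
  · rw [min_eq_right h]
    nlinarith [mul_le_mul_of_nonneg_right hCu hy.le]
  · rw [min_eq_left h]
    nlinarith [Real.exp_pos (-(u * y))]

lemma nonneg_aux (R : BernsteinRep φ) {u : ℝ} (hu : 0 ≤ u) : 0 ≤ φ u := by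
  rw [R.eq u hu]
  have hI : 0 ≤ ∫ y, (1 - Real.exp (-(u * y))) ∂ R.μ := by
    refine integral_nonneg_of_ae ((ae_pos R).mono fun y hy => ?_)
    have : Real.exp (-(u * y)) ≤ 1 := by
      have := Real.exp_le_exp.mpr (neg_nonpos.mpr (mul_nonneg hu hy.le))
      rwa [Real.exp_zero] at this
    show (0:ℝ) ≤ 1 - Real.exp (-(u * y))
    linarith
  have := R.k_nonneg
  have := mul_nonneg R.d_nonneg hu
  linarith

lemma mono_aux (R : BernsteinRep φ) : MonotoneOn φ (Set.Ici 0) := by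
  intro x hx y hy hxy
  rw [R.eq x hx, R.eq y hy]
  have hI : ∫ t, (1 - Real.exp (-(x * t))) ∂ R.μ ≤ ∫ t, (1 - Real.exp (-(y * t))) ∂ R.μ := by
    refine integral_mono_ae (integrable_aux R hx) (integrable_aux R hy)
      ((ae_pos R).mono fun t ht => ?_)
    have : Real.exp (-(y * t)) ≤ Real.exp (-(x * t)) := by
      apply Real.exp_le_exp.mpr
      nlinarith
    simp only; linarith
  have := mul_le_mul_of_nonneg_left hxy R.d_nonneg
  linarith

lemma concave_aux (R : BernsteinRep φ) : ConcaveOn ℝ (Set.Ici 0) φ := by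
  refine ⟨convex_Ici 0, fun x hx y hy a b ha hb hab => ?_⟩
  simp only [smul_eq_mul] at *
  have hx' : (0:ℝ) ≤ x := hx
  have hy' : (0:ℝ) ≤ y := hy
  have hxy : (0:ℝ) ≤ a * x + b * y := add_nonneg (mul_nonneg ha hx') (mul_nonneg hb hy')
  rw [R.eq x hx', R.eq y hy', R.eq _ hxy]
  have key : a * (∫ t, (1 - Real.exp (-(x * t))) ∂ R.μ)
      + b * (∫ t, (1 - Real.exp (-(y * t))) ∂ R.μ)
      ≤ ∫ t, (1 - Real.exp (-((a * x + b * y) * t))) ∂ R.μ := by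
    rw [← integral_const_mul, ← integral_const_mul,
      ← integral_add ((integrable_aux R hx').const_mul a) ((integrable_aux R hy').const_mul b)]
    refine integral_mono_ae (((integrable_aux R hx').const_mul a).add
      ((integrable_aux R hy').const_mul b)) (integrable_aux R hxy)
      ((ae_pos R).mono fun t ht => ?_)
    have hcv := convexOn_exp.2 (Set.mem_univ (-(x * t))) (Set.mem_univ (-(y * t))) ha hb hab
    simp only [smul_eq_mul] at hcv
    have heq : a * -(x * t) + b * -(y * t) = -((a * x + b * y) * t) := by ring
    rw [heq] at hcv
    show a * (1 - Real.exp (-(x * t))) + b * (1 - Real.exp (-(y * t)))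
      ≤ 1 - Real.exp (-((a * x + b * y) * t))
    nlinarith
  have hexp : a * (R.k + R.d * x + ∫ t, (1 - Real.exp (-(x * t))) ∂ R.μ)
      + b * (R.k + R.d * y + ∫ t, (1 - Real.exp (-(y * t))) ∂ R.μ)
      = R.k + R.d * (a * x + b * y)
        + (a * (∫ t, (1 - Real.exp (-(x * t))) ∂ R.μ)
          + b * (∫ t, (1 - Real.exp (-(y * t))) ∂ R.μ)) := by
    have hb' : b = 1 - a := by linarith
    rw [hb']; ring
  rw [hexp]
  linarith [key]

lemma pos_aux (R : BernsteinRep φ) (hnz : ∃ u : ℝ, 0 ≤ u ∧ φ u ≠ 0)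
    {u : ℝ} (hu : 0 < u) : 0 < φ u := by
  obtain ⟨u₀, hu₀, hne⟩ := hnz
  have h0 : 0 < φ u₀ := lt_of_le_of_ne (nonneg_aux R hu₀) (Ne.symm hne)
  rcases hu₀.eq_or_lt with h | h
  · exact h0.trans_le (mono_aux R (by rw [← h]; exact Set.self_mem_Ici) (Set.mem_Ici.mpr hu.le)
      (by rw [← h]; exact hu.le))
  · rcases le_total u₀ u with hle | hle
    · exact h0.trans_le (mono_aux R (Set.mem_Ici.mpr h.le) (Set.mem_Ici.mpr hu.le) hle)
    · set t := u / u₀ with htdef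
      have ht0 : 0 < t := div_pos hu h
      have ht1 : t ≤ 1 := (div_le_one h).mpr hle
      have hc := (concave_aux R).2 (Set.self_mem_Ici) (Set.mem_Ici.mpr h.le)
        (by linarith : (0:ℝ) ≤ 1 - t) ht0.le (by ring)
      simp only [smul_eq_mul, mul_zero, zero_add] at hc
      have htu : t * u₀ = u := div_mul_cancel₀ u h.ne'
      rw [htu] at hc
      have hφ0 : 0 ≤ φ 0 := nonneg_aux R le_rfl
      nlinarith

end BernsteinGammaAux

/-- For a nonzero Bernstein function `φ` with derivative `φ'` on `(0,∞)`, the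
sequences `a(n) = ∑_{k=1}^n φ'(k)/φ(k) − log φ(n)` and
`g(n) = ∑_{k=1}^n φ'(k)/φ(k) − log φ(n+1)` satisfy: `g` is non-decreasing, `a − g → 0`,
both converge to a common limit `γ_φ ∈ [−log φ(1), φ'(1)/φ(1) − log φ(1)]`. -/
theorem bernstein_gamma_constant
    (φ φ' : ℝ → ℝ) (hφ : IsBernstein φ) (hnz : BernsteinNonzero φ)
    (hderiv : ∀ u : ℝ, 0 < u → HasDerivAt φ (φ' u) u)
    (a g : ℕ → ℝ)
    (ha : ∀ n : ℕ, a n = (∑ k ∈ Finset.Icc 1 n, φ' (k : ℝ) / φ (k : ℝ))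
      - Real.log (φ (n : ℝ)))
    (hg : ∀ n : ℕ, g n = (∑ k ∈ Finset.Icc 1 n, φ' (k : ℝ) / φ (k : ℝ))
      - Real.log (φ ((n : ℝ) + 1))) :
    (∀ m n : ℕ, 1 ≤ m → m ≤ n → g m ≤ g n) ∧
    Tendsto (fun n : ℕ => a n - g n) atTop (nhds 0) ∧
    ∃ γ : ℝ, Tendsto a atTop (nhds γ) ∧ Tendsto g atTop (nhds γ) ∧
      -Real.log (φ 1) ≤ γ ∧ γ ≤ φ' 1 / φ 1 - Real.log (φ 1) := by
  obtain ⟨R⟩ := hφ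
  have hpos : ∀ u : ℝ, 0 < u → 0 < φ u := fun u hu => BernsteinGammaAux.pos_aux R hnz hu
  have hconc := BernsteinGammaAux.concave_aux R
  have hmono := BernsteinGammaAux.mono_aux R
  have hanti' : ∀ x y : ℝ, 0 < x → x ≤ y → φ' y ≤ φ' x := by
    intro x y hx hxy
    rcases hxy.eq_or_lt with h | h
    · rw [h]
    · have h1 := hconc.slope_le_of_hasDerivAt (Set.mem_Ici.mpr hx.le)
        (Set.mem_Ici.mpr (hx.trans h).le) h (hderiv x hx)
      have h2 := hconc.le_slope_of_hasDerivAt (Set.mem_Ici.mpr hx.le)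
        (Set.mem_Ici.mpr (hx.trans h).le) h (hderiv y (hx.trans h))
      exact h2.trans h1
  have hd_nonneg : ∀ x : ℝ, 0 < x → 0 ≤ φ' x := by
    intro x hx
    have h1 := hconc.slope_le_of_hasDerivAt (Set.mem_Ici.mpr hx.le)
      (Set.mem_Ici.mpr (by linarith : (0:ℝ) ≤ x + 1)) (by linarith) (hderiv x hx)
    refine le_trans ?_ h1
    rw [slope_def_field]
    have hm := hmono (Set.mem_Ici.mpr hx.le)
      (Set.mem_Ici.mpr (by linarith : (0:ℝ) ≤ x + 1)) (by linarith)
    have hx1 : x + 1 - x = 1 := by ring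
    rw [hx1, div_one]
    linarith
  have hratio : ∀ x y : ℝ, 0 < x → x ≤ y → φ' y / φ y ≤ φ' x / φ x := by
    intro x y hx hxy
    exact div_le_div₀ (hd_nonneg x hx) (hanti' x y hx hxy) (hpos x hx)
      (hmono (Set.mem_Ici.mpr hx.le) (Set.mem_Ici.mpr (hx.le.trans hxy)) hxy)
  have hratio_le : ∀ x : ℝ, 0 < x → φ' x / φ x ≤ 1 / x := by
    intro x hx
    have h2 := hconc.le_slope_of_hasDerivAt Set.self_mem_Ici
      (Set.mem_Ici.mpr hx.le) hx (hderiv x hx)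
    rw [slope_def_field] at h2
    have hφ0 : 0 ≤ φ 0 := BernsteinGammaAux.nonneg_aux R le_rfl
    have hle : φ' x ≤ φ x / x := by
      refine h2.trans ?_
      rw [sub_zero]
      exact div_le_div₀ (hpos x hx).le (by linarith) hx le_rfl
    rw [div_le_div_iff₀ (hpos x hx) hx]
    calc φ' x * x ≤ φ x / x * x := mul_le_mul_of_nonneg_right hle hx.le
      _ = 1 * φ x := by field_simp
  have hlog : ∀ u : ℝ, 0 < u → HasDerivAt (fun t => Real.log (φ t)) (φ' u / φ u) u :=
    fun u hu => (hderiv u hu).log (hpos u hu).ne'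
  have hkey : ∀ x : ℝ, 0 < x →
      φ' (x + 1) / φ (x + 1) ≤ Real.log (φ (x + 1)) - Real.log (φ x) ∧
      Real.log (φ (x + 1)) - Real.log (φ x) ≤ φ' x / φ x := by
    intro x hx
    obtain ⟨c, hc, hceq⟩ := exists_hasDerivAt_eq_slope (fun t => Real.log (φ t))
      (fun t => φ' t / φ t) (by linarith : x < x + 1)
      (fun t ht => (hlog t (by have := ht.1; linarith)).continuousAt.continuousWithinAt)
      (fun t ht => hlog t (by have := ht.1; linarith))
    have h1 : x + 1 - x = 1 := by ring
    rw [h1, div_one] at hceq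
    have hcx : 0 < c := hx.trans hc.1
    constructor
    · rw [← hceq]
      exact hratio c (x + 1) hcx hc.2.le
    · rw [← hceq]
      exact hratio x c hx hc.1.le
  -- step inequalities for the sequences
  have hgstep : ∀ n : ℕ, g n ≤ g (n + 1) := by
    intro n
    rw [hg n, hg (n + 1), Finset.sum_Icc_succ_top (by omega : 1 ≤ n + 1)]
    push_cast
    have h2 := (hkey ((n : ℝ) + 1) (by positivity)).2
    linarith
  have hastep : ∀ n : ℕ, 1 ≤ n → a (n + 1) ≤ a n := by
    intro n hn
    rw [ha n, ha (n + 1), Finset.sum_Icc_succ_top (by omega : 1 ≤ n + 1)]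
    push_cast
    have hn' : (0:ℝ) < (n : ℝ) := by exact_mod_cast hn
    have h1 := (hkey (n : ℝ) hn').1
    linarith
  have hga : ∀ n : ℕ, 1 ≤ n → g n ≤ a n := by
    intro n hn
    rw [ha n, hg n]
    have hn' : (0:ℝ) < (n : ℝ) := by exact_mod_cast hn
    have hlogle : Real.log (φ (n : ℝ)) ≤ Real.log (φ ((n : ℝ) + 1)) :=
      Real.log_le_log (hpos _ hn')
        (hmono (Set.mem_Ici.mpr hn'.le)
          (Set.mem_Ici.mpr (by linarith : (0:ℝ) ≤ (n:ℝ) + 1))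
          (by linarith : (n:ℝ) ≤ (n:ℝ) + 1))
    linarith
  have hgmono : ∀ m n : ℕ, 1 ≤ m → m ≤ n → g m ≤ g n := by
    intro m n hm hmn
    induction n, hmn using Nat.le_induction with
    | base => exact le_rfl
    | succ n hmn ih => exact ih.trans (hgstep n)
  have haanti : ∀ m n : ℕ, 1 ≤ m → m ≤ n → a n ≤ a m := by
    intro m n hm hmn
    induction n, hmn using Nat.le_induction with
    | base => exact le_rfl
    | succ n hmn ih => exact (hastep n (hm.trans hmn)).trans ih
  -- a n - g n = log φ(n+1) - log φ n ∈ [0, 1/n]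
  have hdiff : ∀ n : ℕ, a n - g n = Real.log (φ ((n : ℝ) + 1)) - Real.log (φ (n : ℝ)) := by
    intro n
    rw [ha n, hg n]
    ring
  have h0 : Tendsto (fun n : ℕ => a n - g n) atTop (nhds 0) := by
    refine tendsto_of_tendsto_of_tendsto_of_le_of_le' tendsto_const_nhds
      tendsto_one_div_atTop_nhds_zero_nat ?_ ?_
    · filter_upwards [eventually_ge_atTop 1] with n hn
      have hn' : (0:ℝ) < (n : ℝ) := by exact_mod_cast hn
      rw [hdiff n]
      have := Real.log_le_log (hpos _ hn')
        (hmono (Set.mem_Ici.mpr hn'.le)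
          (Set.mem_Ici.mpr (by linarith : (0:ℝ) ≤ (n:ℝ) + 1))
          (by linarith : (n:ℝ) ≤ (n:ℝ) + 1))
      linarith
    · filter_upwards [eventually_ge_atTop 1] with n hn
      have hn' : (0:ℝ) < (n : ℝ) := by exact_mod_cast hn
      rw [hdiff n]
      have h2 := (hkey (n : ℝ) hn').2
      have h3 := hratio_le (n : ℝ) hn'
      linarith
  set G : ℕ → ℝ := fun n => g (n + 1) with hGdef
  have hGmono : Monotone G := monotone_nat_of_le_succ fun n => hgstep (n + 1)
  have hGub : ∀ n : ℕ, G n ≤ a 1 :=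
    fun n => (hga (n + 1) (by omega)).trans (haanti 1 (n + 1) le_rfl (by omega))
  have hGbdd : BddAbove (Set.range G) := by
    refine ⟨a 1, ?_⟩
    rintro _ ⟨n, rfl⟩
    exact hGub n
  have hGlim : Tendsto G atTop (nhds (⨆ n, G n)) := tendsto_atTop_ciSup hGmono hGbdd
  have hglim : Tendsto g atTop (nhds (⨆ n, G n)) := (tendsto_add_atTop_iff_nat 1).mp hGlim
  have halim : Tendsto a atTop (nhds (⨆ n, G n)) := by
    have h2 := hglim.add h0
    rw [add_zero] at h2
    have heq : (fun n => g n + (a n - g n)) = a := by funext n; ring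
    rwa [heq] at h2
  refine ⟨hgmono, h0, ⨆ n, G n, halim, hglim, ?_, ?_⟩
  · have hγ1 : G 0 ≤ ⨆ n, G n := le_ciSup hGbdd 0
    have hg1 : -Real.log (φ 1) ≤ g 1 := by
      rw [hg 1, Finset.Icc_self, Finset.sum_singleton]
      have h2 := (hkey 1 one_pos).2
      push_cast
      linarith
    exact le_trans hg1 hγ1
  · have hγ2 : (⨆ n, G n) ≤ a 1 := ciSup_le hGub
    have ha1 : a 1 = φ' 1 / φ 1 - Real.log (φ 1) := by
      rw [ha 1, Finset.Icc_self, Finset.sum_singleton]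
      push_cast
      ring
    rw [← ha1]
    exact hγ2

end
end

section
/- Let φ be a nonzero Bernstein function with lim_{u→∞} φ(u) = ∞ whose Lévy measure has a non-increasing density, let k = φ(0), and let ϕ : [k,∞) → [0,∞) be the continuous inverse of φ. Define G : [1,∞) → ℝ by G(u) = ∫_1^u log φ(r) dr + log φ(1). Then for every y ≥ log φ(1), the supremum sup_{u ≥ 1} (u·y − G(u)) is attained at u = ϕ(e^y) and equals ∫_k^{e^y} ϕ(r)/r dr − ∫_k^{φ(1)} ϕ(r)/r dr. -/
open MeasureTheory Filter Topology Set
open scoped ENNReal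

noncomputable section

section BernHelpers

variable {φ : ℝ → ℝ}

lemma bern_aux_meas (R : BernsteinJRep φ) :
    AEMeasurable R.v (volume.restrict (Set.Ioi 0)) :=
  aemeasurable_restrict_of_antitoneOn measurableSet_Ioi
    (fun _ ha _ _ hab => R.v_anti _ _ ha hab)

lemma bern_bound_int (R : BernsteinJRep φ) (c : ℝ) :
    Integrable (fun y => c * (min 1 y * R.v y)) (volume.restrict (Set.Ioi 0)) := by
  refine ⟨(((measurable_const.min measurable_id).aemeasurable.mul
      (bern_aux_meas R)).const_mul c).aestronglyMeasurable, ?_⟩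
  show (∫⁻ y, (‖c * (min 1 y * R.v y)‖₊ : ℝ≥0∞) ∂(volume.restrict (Set.Ioi 0))) < ⊤
  calc ∫⁻ y, (‖c * (min 1 y * R.v y)‖₊ : ℝ≥0∞) ∂(volume.restrict (Set.Ioi 0))
      = ∫⁻ y, ENNReal.ofReal |c| * ENNReal.ofReal (min 1 y * R.v y)
        ∂(volume.restrict (Set.Ioi 0)) := by
        refine lintegral_congr_ae ?_
        filter_upwards [ae_restrict_mem measurableSet_Ioi] with y hy
        have hm : 0 ≤ min 1 y * R.v y :=
          mul_nonneg (le_min zero_le_one (le_of_lt hy)) (R.v_nonneg y hy)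
        rw [← enorm_eq_nnnorm, ← ofReal_norm, norm_mul, Real.norm_eq_abs, Real.norm_eq_abs,
          abs_of_nonneg hm, ENNReal.ofReal_mul (abs_nonneg c)]
    _ = ENNReal.ofReal |c| * ∫⁻ y in Set.Ioi (0:ℝ), ENNReal.ofReal (min 1 y * R.v y) :=
        lintegral_const_mul' _ _ ENNReal.ofReal_ne_top
    _ < ⊤ := ENNReal.mul_lt_top ENNReal.ofReal_lt_top R.levy

lemma bern_pointwise (R : BernsteinJRep φ) {u y : ℝ} (hu : 0 ≤ u) (hy : 0 < y) :
    ‖(1 - Real.exp (-(u * y))) * R.v y‖ ≤ max 1 u * (min 1 y * R.v y) := by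
  have hv := R.v_nonneg y hy
  have he : Real.exp (-(u * y)) ≤ 1 :=
    Real.exp_le_one_iff.2 (neg_nonpos.2 (mul_nonneg hu hy.le))
  have h0 : 0 ≤ 1 - Real.exp (-(u * y)) := by linarith
  have k1 : 1 - Real.exp (-(u * y)) ≤ min 1 (u * y) := by
    refine le_min (by linarith [Real.exp_pos (-(u * y))]) ?_
    linarith [Real.add_one_le_exp (-(u * y))]
  have k2 : min 1 (u * y) ≤ max 1 u * min 1 y := by
    rcases le_total y 1 with h | h
    · rw [min_eq_right h]
      calc min 1 (u * y) ≤ u * y := min_le_right _ _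
        _ ≤ max 1 u * y := mul_le_mul_of_nonneg_right (le_max_right 1 u) hy.le
    · rw [min_eq_left h]
      calc min 1 (u * y) ≤ 1 := min_le_left _ _
        _ ≤ max 1 u * 1 := by rw [mul_one]; exact le_max_left 1 u
  rw [Real.norm_of_nonneg (mul_nonneg h0 hv), ← mul_assoc]
  exact mul_le_mul_of_nonneg_right (k1.trans k2) hv

lemma bern_int (R : BernsteinJRep φ) {u : ℝ} (hu : 0 ≤ u) :
    Integrable (fun y => (1 - Real.exp (-(u * y))) * R.v y)
      (volume.restrict (Set.Ioi 0)) := by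
  refine (bern_bound_int R (max 1 u)).mono'
    (((by fun_prop : Continuous fun y : ℝ => 1 - Real.exp (-(u * y))).aemeasurable.mul
      (bern_aux_meas R)).aestronglyMeasurable) ?_
  filter_upwards [ae_restrict_mem measurableSet_Ioi] with y hy
  exact bern_pointwise R hu hy

lemma bern_phi0 (R : BernsteinJRep φ) : φ 0 = R.k := by
  rw [R.eq 0 le_rfl]
  simp

lemma bern_mono (R : BernsteinJRep φ) : MonotoneOn φ (Set.Ici 0) := by
  intro a ha b hb hab
  rw [R.eq a ha, R.eq b hb]
  have hint : (∫ y in Set.Ioi (0:ℝ), (1 - Real.exp (-(a * y))) * R.v y)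
      ≤ ∫ y in Set.Ioi (0:ℝ), (1 - Real.exp (-(b * y))) * R.v y := by
    refine integral_mono_ae (bern_int R ha) (bern_int R hb) ?_
    filter_upwards [ae_restrict_mem measurableSet_Ioi] with y hy
    have : Real.exp (-(b * y)) ≤ Real.exp (-(a * y)) := by
      apply Real.exp_le_exp.2; nlinarith [(show (0:ℝ) < y from hy).le]
    exact mul_le_mul_of_nonneg_right (by linarith) (R.v_nonneg y hy)
  have := R.d_nonneg
  nlinarith

lemma bern_cont (R : BernsteinJRep φ) : ContinuousOn φ (Set.Ici 0) := by
  have key : ∀ M : ℝ,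
      ContinuousOn (fun u => ∫ y in Set.Ioi (0:ℝ), (1 - Real.exp (-(u * y))) * R.v y)
        (Set.Icc 0 M) := by
    intro M
    refine continuousOn_of_dominated (bound := fun y => max 1 M * (min 1 y * R.v y))
      (fun u hu => (((by fun_prop :
          Continuous fun y : ℝ => 1 - Real.exp (-(u * y))).aemeasurable.mul
        (bern_aux_meas R)).aestronglyMeasurable)) ?_ (bern_bound_int R (max 1 M)) ?_
    · intro u hu
      filter_upwards [ae_restrict_mem measurableSet_Ioi] with y hy
      refine (bern_pointwise R hu.1 hy).trans ?_
      have hm : 0 ≤ min 1 y * R.v y :=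
        mul_nonneg (le_min zero_le_one (le_of_lt hy)) (R.v_nonneg y hy)
      exact mul_le_mul_of_nonneg_right (max_le_max le_rfl hu.2) hm
    · exact Filter.Eventually.of_forall fun y => (by fun_prop :
        Continuous fun u : ℝ => (1 - Real.exp (-(u * y))) * R.v y).continuousOn
  have hg : ContinuousOn
      (fun u => R.k + R.d * u + ∫ y in Set.Ioi (0:ℝ), (1 - Real.exp (-(u * y))) * R.v y)
      (Set.Ici 0) := by
    intro u₀ hu₀
    have h1 : ContinuousWithinAt
        (fun u => R.k + R.d * u + ∫ y in Set.Ioi (0:ℝ), (1 - Real.exp (-(u * y))) * R.v y)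
        (Set.Icc 0 (u₀ + 1)) u₀ :=
      ((continuous_const.add (continuous_const.mul continuous_id)).continuousWithinAt).add
        ((key (u₀ + 1)) u₀ ⟨hu₀, by linarith [hu₀.out]⟩)
    refine h1.mono_of_mem_nhdsWithin ?_
    rw [← Set.Ici_inter_Iic]
    exact Filter.inter_mem self_mem_nhdsWithin
      (mem_nhdsWithin_of_mem_nhds (Iic_mem_nhds (by linarith [hu₀.out])))
  exact hg.congr fun u hu => R.eq u hu

lemma bern_lin_lb (R : BernsteinJRep φ) {ε : ℝ} (h0 : 0 ≤ ε) (h1 : ε ≤ 1) :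
    ε * φ 1 ≤ φ ε := by
  rw [R.eq ε h0, R.eq 1 zero_le_one]
  have hint : (∫ y in Set.Ioi (0:ℝ), ε * ((1 - Real.exp (-(1 * y))) * R.v y))
      ≤ ∫ y in Set.Ioi (0:ℝ), (1 - Real.exp (-(ε * y))) * R.v y := by
    refine integral_mono_ae ((bern_int R zero_le_one).const_mul ε) (bern_int R h0) ?_
    filter_upwards [ae_restrict_mem measurableSet_Ioi] with y hy
    have hconv : Real.exp (-(ε * y)) ≤ (1 - ε) * 1 + ε * Real.exp (-y) := by
      have := convexOn_exp.2 (Set.mem_univ (0:ℝ)) (Set.mem_univ (-y))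
        (by linarith : (0:ℝ) ≤ 1 - ε) h0 (by ring)
      simpa [smul_eq_mul, mul_comm] using this
    have key : ε * (1 - Real.exp (-(1 * y))) ≤ 1 - Real.exp (-(ε * y)) := by
      rw [one_mul]; nlinarith
    calc ε * ((1 - Real.exp (-(1 * y))) * R.v y)
        = (ε * (1 - Real.exp (-(1 * y)))) * R.v y := by ring
      _ ≤ (1 - Real.exp (-(ε * y))) * R.v y :=
          mul_le_mul_of_nonneg_right key (R.v_nonneg y hy)
  rw [integral_const_mul] at hint
  have hk := R.k_nonneg
  have hd := R.d_nonneg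
  nlinarith

end BernHelpers

/-- For an unbounded Jurek-class Bernstein function `φ` with inverse `ϕ` and
`G(u) = ∫_1^u log φ(r) dr + log φ(1)`, for every `y ≥ log φ(1)` the supremum of
`u·y − G(u)` over `u ≥ 1` is attained at `u = ϕ(e^y)` and equals
`∫_k^{e^y} ϕ(r)/r dr − ∫_k^{φ(1)} ϕ(r)/r dr` where `k = φ(0)`. -/
theorem bernstein_legendre_transform
    (φ ϕ : ℝ → ℝ) (repJ : BernsteinJRep φ) (hnz : BernsteinNonzero φ)
    (hφtop : Tendsto φ atTop atTop)
    (hinv₁ : ∀ u : ℝ, 0 ≤ u → ϕ (φ u) = u)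
    (hinv₂ : ∀ x : ℝ, φ 0 ≤ x → φ (ϕ x) = x)
    (G : ℝ → ℝ)
    (hG : ∀ u : ℝ, G u = (∫ r in (1:ℝ)..u, Real.log (φ r)) + Real.log (φ 1))
    (y : ℝ) (hy : Real.log (φ 1) ≤ y) :
    1 ≤ ϕ (Real.exp y) ∧
    (∀ u : ℝ, 1 ≤ u → u * y - G u ≤ ϕ (Real.exp y) * y - G (ϕ (Real.exp y))) ∧
    ϕ (Real.exp y) * y - G (ϕ (Real.exp y)) =
      (∫ r in (φ 0)..(Real.exp y), ϕ r / r) - ∫ r in (φ 0)..(φ 1), ϕ r / r := by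
  have hmono := bern_mono repJ
  have hcont := bern_cont repJ
  have hk0 : 0 ≤ φ 0 := by rw [bern_phi0 repJ]; exact repJ.k_nonneg
  have hsm : StrictMonoOn φ (Set.Ici 0) := by
    intro a ha b hb hab
    rcases lt_or_eq_of_le (hmono ha hb hab.le) with h | h
    · exact h
    · exfalso
      have h1 := hinv₁ a ha
      have h2 := hinv₁ b hb
      rw [h] at h1; rw [h1] at h2
      exact absurd h2 hab.ne
  have hφ1pos : 0 < φ 1 := lt_of_le_of_lt hk0 (hsm Set.self_mem_Ici (by norm_num) one_pos)
  have hEy : φ 1 ≤ Real.exp y := by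
    calc φ 1 = Real.exp (Real.log (φ 1)) := (Real.exp_log hφ1pos).symm
      _ ≤ Real.exp y := Real.exp_le_exp.2 hy
  have hk_le : φ 0 ≤ φ 1 := hmono Set.self_mem_Ici (by norm_num) zero_le_one
  have hsurj : ∀ x' : ℝ, φ 0 ≤ x' → 0 ≤ ϕ x' ∧ φ (ϕ x') = x' := by
    intro x' hx'
    obtain ⟨b, hb1, hb2⟩ : ∃ b : ℝ, 0 ≤ b ∧ x' ≤ φ b := by
      obtain ⟨b, hb⟩ := ((eventually_ge_atTop (0:ℝ)).and
        (hφtop.eventually_ge_atTop x')).exists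
      exact ⟨b, hb.1, hb.2⟩
    obtain ⟨u, hu, hφu⟩ := intermediate_value_Icc hb1
      (hcont.mono Set.Icc_subset_Ici_self) (Set.mem_Icc.2 ⟨hx', hb2⟩)
    constructor
    · rw [← hφu, hinv₁ u hu.1]; exact hu.1
    · exact hinv₂ x' hx'
  have hϕmono : MonotoneOn ϕ (Set.Ici (φ 0)) := by
    intro a ha b hb hab
    by_contra hlt
    push_neg at hlt
    have h1 := hsurj a ha
    have h2 := hsurj b hb
    have := hsm (Set.mem_Ici.2 h2.1) (Set.mem_Ici.2 h1.1) hlt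
    rw [h1.2, h2.2] at this
    linarith
  have hϕφ1 : ϕ (φ 1) = 1 := hinv₁ 1 zero_le_one
  set x := ϕ (Real.exp y) with hxdef
  have hkEy : φ 0 ≤ Real.exp y := hk_le.trans hEy
  have hx1 : 1 ≤ x := by
    rw [← hϕφ1]
    exact hϕmono (Set.mem_Ici.2 hk_le) (Set.mem_Ici.2 hkEy) hEy
  have hx0 : (0:ℝ) ≤ x := zero_le_one.trans hx1
  have hφx : φ x = Real.exp y := (hsurj _ hkEy).2
  have hlogφx : Real.log (φ x) = y := by rw [hφx, Real.log_exp]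
  have hφpos : ∀ r : ℝ, 1 ≤ r → 0 < φ r := fun r hr =>
    lt_of_lt_of_le hφ1pos (hmono (by norm_num) (Set.mem_Ici.2 (zero_le_one.trans hr)) hr)
  have hlogmono : MonotoneOn (fun r => Real.log (φ r)) (Set.Ici 1) := by
    intro a ha b hb hab
    exact Real.log_le_log (hφpos a ha)
      (hmono (Set.mem_Ici.2 (zero_le_one.trans ha)) (Set.mem_Ici.2 (zero_le_one.trans hb)) hab)
  have hII : ∀ a b : ℝ, 1 ≤ a → 1 ≤ b →
      IntervalIntegrable (fun r => Real.log (φ r)) volume a b := by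
    intro a b ha hb
    refine (hlogmono.mono ?_).intervalIntegrable
    rw [Set.uIcc_eq_union]
    exact Set.union_subset (Set.Icc_subset_Ici_self.trans (Set.Ici_subset_Ici.2 ha))
      (Set.Icc_subset_Ici_self.trans (Set.Ici_subset_Ici.2 hb))
  refine ⟨hx1, ?_, ?_⟩
  · -- maximality
    intro u hu
    have hGsub : G u - G x = ∫ r in x..u, Real.log (φ r) := by
      rw [hG u, hG x]
      have := intervalIntegral.integral_interval_sub_left (hII 1 u le_rfl hu)
        (hII 1 x le_rfl hx1)
      linarith
    have key : (u - x) * y ≤ ∫ r in x..u, Real.log (φ r) := by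
      rcases le_total x u with h | h
      · have hc : (∫ _ in x..u, y) = (u - x) * y := by simp [mul_comm]
        rw [← hc]
        refine intervalIntegral.integral_mono_on h (by simp) (hII x u hx1 hu) ?_
        intro r hr
        rw [← hlogφx]
        exact hlogmono (Set.mem_Ici.2 hx1) (Set.mem_Ici.2 (hx1.trans hr.1)) hr.1
      · have hc : (∫ _ in u..x, y) = (x - u) * y := by simp [mul_comm]
        have h2 : (∫ r in u..x, Real.log (φ r)) ≤ (x - u) * y := by
          rw [← hc]
          refine intervalIntegral.integral_mono_on h (hII u x hu hx1) (by simp) ?_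
          intro r hr
          rw [← hlogφx]
          exact hlogmono (Set.mem_Ici.2 (hu.trans hr.1)) (Set.mem_Ici.2 hx1) hr.2
        rw [intervalIntegral.integral_symm]
        linarith
    linarith
  · -- the value identity
    set f1 := Real.log (φ 1) with hf1def
    set F : ℝ → ℝ := fun u => Real.log (φ (max u 1)) with hFdef
    set Gg : ℝ → ℝ := fun t => ϕ (max (Real.exp t) (φ 1)) with hGgdef
    have hFmono : Monotone F := by
      intro a b hab
      refine Real.log_le_log (hφpos _ (le_max_right a 1)) ?_
      exact hmono (Set.mem_Ici.2 (zero_le_one.trans (le_max_right a 1)))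
        (Set.mem_Ici.2 (zero_le_one.trans (le_max_right b 1)))
        (max_le_max hab le_rfl)
    have hGgmono : Monotone Gg := by
      intro a b hab
      exact hϕmono (Set.mem_Ici.2 (hk_le.trans (le_max_right _ _)))
        (Set.mem_Ici.2 (hk_le.trans (le_max_right _ _)))
        (max_le_max (Real.exp_le_exp.2 hab) le_rfl)
    have hGg_eq : ∀ t : ℝ, f1 ≤ t → Gg t = ϕ (Real.exp t) := by
      intro t ht
      have h : φ 1 ≤ Real.exp t := by
        calc φ 1 = Real.exp f1 := (Real.exp_log hφ1pos).symm
          _ ≤ Real.exp t := Real.exp_le_exp.2 ht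
      simp only [hGgdef, max_eq_left h]
    have hGg_ge1 : ∀ t : ℝ, 1 ≤ Gg t := by
      intro t
      rw [← hϕφ1]
      exact hϕmono (Set.mem_Ici.2 hk_le)
        (Set.mem_Ici.2 (hk_le.trans (le_max_right _ _))) (le_max_right _ _)
    have hGg_lex : ∀ t : ℝ, t ≤ y → Gg t ≤ x := by
      intro t ht
      have h1 : Gg t ≤ Gg y := hGgmono ht
      rwa [hGg_eq y hy] at h1
    have hF_eq : ∀ u : ℝ, 1 ≤ u → F u = Real.log (φ u) := by
      intro u hu; simp only [hFdef, max_eq_left hu]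
    have hFx : F x = y := by rw [hF_eq x hx1, hlogφx]
    have hF1 : F 1 = f1 := by rw [hF_eq 1 le_rfl]
    have hf1y : f1 ≤ y := hy
    have hiff : ∀ t ∈ Set.Ioc f1 y, ∀ u ∈ Set.Ioc (1:ℝ) x, (u ≤ Gg t ↔ F u ≤ t) := by
      intro t ht u hu
      have hGgt := hGg_eq t ht.1.le
      have hexpt : φ 1 ≤ Real.exp t := by
        calc φ 1 = Real.exp f1 := (Real.exp_log hφ1pos).symm
          _ ≤ Real.exp t := Real.exp_le_exp.2 ht.1.le
      have hφGgt : φ (Gg t) = Real.exp t := by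
        rw [hGgt]; exact (hsurj _ (hk_le.trans hexpt)).2
      have hGgt0 : 0 ≤ Gg t := zero_le_one.trans (hGg_ge1 t)
      have hu0 : (0:ℝ) ≤ u := zero_le_one.trans hu.1.le
      have hφu : 0 < φ u := hφpos u hu.1.le
      rw [hF_eq u hu.1.le]
      constructor
      · intro h
        have hle : φ u ≤ Real.exp t := by
          rw [← hφGgt]
          exact hmono (Set.mem_Ici.2 hu0) (Set.mem_Ici.2 hGgt0) h
        calc Real.log (φ u) ≤ Real.log (Real.exp t) := Real.log_le_log hφu hle
          _ = t := Real.log_exp t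
      · intro h
        have h1 : φ u ≤ Real.exp t := by
          calc φ u = Real.exp (Real.log (φ u)) := (Real.exp_log hφu).symm
            _ ≤ Real.exp t := Real.exp_le_exp.2 h
        have h2 : φ 0 ≤ φ u := hmono Set.self_mem_Ici (Set.mem_Ici.2 hu0) hu0
        calc u = ϕ (φ u) := (hinv₁ u hu0).symm
          _ ≤ ϕ (Real.exp t) := hϕmono (Set.mem_Ici.2 h2)
              (Set.mem_Ici.2 (h2.trans h1)) h1
          _ = Gg t := hGgt.symm
    set A : Set (ℝ × ℝ) :=
      {p : ℝ × ℝ | p.1 ∈ Set.Ioc f1 y ∧ p.2 ∈ Set.Ioc (1:ℝ) x ∧ p.2 ≤ Gg p.1} with hAdef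
    have hA : MeasurableSet A := by
      have hAeq : A = {p : ℝ × ℝ | p.1 ∈ Set.Ioc f1 y} ∩
          ({p : ℝ × ℝ | p.2 ∈ Set.Ioc (1:ℝ) x} ∩ {p : ℝ × ℝ | p.2 ≤ Gg p.1}) := by
        ext p; simp only [hAdef, Set.mem_setOf_eq, Set.mem_inter_iff]
      rw [hAeq]
      exact (measurable_fst measurableSet_Ioc).inter
        ((measurable_snd measurableSet_Ioc).inter
          (measurableSet_le measurable_snd (hGgmono.measurable.comp measurable_fst)))
    have fub1 : (volume.prod volume) A
        = ∫⁻ t in Set.Ioc f1 y, ENNReal.ofReal (Gg t - 1) := by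
      rw [Measure.prod_apply hA]
      have hsec : ∀ t : ℝ, volume (Prod.mk t ⁻¹' A)
          = (Set.Ioc f1 y).indicator (fun t => ENNReal.ofReal (Gg t - 1)) t := by
        intro t
        by_cases ht : t ∈ Set.Ioc f1 y
        · have hpre : Prod.mk t ⁻¹' A = Set.Ioc 1 (Gg t) := by
            ext u
            simp only [hAdef, Set.mem_preimage, Set.mem_setOf_eq, Set.mem_Ioc]
            constructor
            · rintro ⟨_, hu, hle⟩; exact ⟨hu.1, hle⟩
            · rintro ⟨h1, h2⟩
              exact ⟨ht, ⟨h1, h2.trans (hGg_lex t ht.2)⟩, h2⟩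
          rw [hpre, Real.volume_Ioc, Set.indicator_of_mem ht]
        · have hpre : Prod.mk t ⁻¹' A = ∅ := by
            ext u
            simp only [hAdef, Set.mem_preimage, Set.mem_setOf_eq,
              Set.mem_empty_iff_false, iff_false, not_and]
            intro h; exact absurd h ht
          rw [hpre, measure_empty, Set.indicator_of_notMem ht]
      rw [lintegral_congr hsec, lintegral_indicator measurableSet_Ioc]
    have fub2 : (volume.prod volume) A
        = ∫⁻ u in Set.Ioc (1:ℝ) x, ENNReal.ofReal (y - F u) := by
      rw [Measure.prod_apply_symm hA]
      have hsec : ∀ u : ℝ, volume ((fun t => (t, u)) ⁻¹' A)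
          = (Set.Ioc (1:ℝ) x).indicator (fun u => ENNReal.ofReal (y - F u)) u := by
        intro u
        by_cases hu : u ∈ Set.Ioc (1:ℝ) x
        · have hFu1 : f1 ≤ F u := by rw [← hF1]; exact hFmono hu.1.le
          have hFuy : F u ≤ y := by rw [← hFx]; exact hFmono hu.2
          have hpre : (fun t => (t, u)) ⁻¹' A = {t | t ∈ Set.Ioc f1 y ∧ F u ≤ t} := by
            ext t
            simp only [hAdef, Set.mem_preimage, Set.mem_setOf_eq]
            constructor
            · rintro ⟨ht, _, hle⟩; exact ⟨ht, (hiff t ht u hu).1 hle⟩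
            · rintro ⟨ht, hle⟩; exact ⟨ht, hu, (hiff t ht u hu).2 hle⟩
          have hsub1 : Set.Ioc (F u) y ⊆ (fun t => (t, u)) ⁻¹' A := by
            rw [hpre]; intro t ht
            exact ⟨⟨lt_of_le_of_lt hFu1 ht.1, ht.2⟩, ht.1.le⟩
          have hsub2 : (fun t => (t, u)) ⁻¹' A ⊆ Set.Icc (F u) y := by
            rw [hpre]; intro t ht; exact ⟨ht.2, ht.1.2⟩
          rw [Set.indicator_of_mem hu]
          refine le_antisymm ?_ ?_
          · calc volume ((fun t => (t, u)) ⁻¹' A) ≤ volume (Set.Icc (F u) y) :=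
                measure_mono hsub2
              _ = ENNReal.ofReal (y - F u) := Real.volume_Icc
          · calc ENNReal.ofReal (y - F u) = volume (Set.Ioc (F u) y) :=
                Real.volume_Ioc.symm
              _ ≤ volume ((fun t => (t, u)) ⁻¹' A) := measure_mono hsub1
        · have hpre : (fun t => (t, u)) ⁻¹' A = ∅ := by
            ext t
            simp only [hAdef, Set.mem_preimage, Set.mem_setOf_eq,
              Set.mem_empty_iff_false, iff_false, not_and]
            intro _ h; exact absurd h hu
          rw [hpre, measure_empty, Set.indicator_of_notMem hu]
      rw [lintegral_congr hsec, lintegral_indicator measurableSet_Ioc]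
    have hGgInt : IntegrableOn Gg (Set.Ioc f1 y) volume :=
      (((hGgmono.monotoneOn _).integrableOn_isCompact (isCompact_Icc
        (a := f1) (b := y))).mono_set Set.Ioc_subset_Icc_self)
    have hFInt : IntegrableOn F (Set.Ioc (1:ℝ) x) volume :=
      (((hFmono.monotoneOn _).integrableOn_isCompact (isCompact_Icc
        (a := (1:ℝ)) (b := x))).mono_set Set.Ioc_subset_Icc_self)
    have hc1 : IntegrableOn (fun _ : ℝ => (1:ℝ)) (Set.Ioc f1 y) volume :=
      integrableOn_const measure_Ioc_lt_top.ne
    have hcy : IntegrableOn (fun _ : ℝ => y) (Set.Ioc (1:ℝ) x) volume :=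
      integrableOn_const measure_Ioc_lt_top.ne
    have hGg1Int : IntegrableOn (fun t => Gg t - 1) (Set.Ioc f1 y) volume :=
      hGgInt.sub hc1
    have hyFInt : IntegrableOn (fun u => y - F u) (Set.Ioc (1:ℝ) x) volume :=
      hcy.sub hFInt
    have hnn1 : 0 ≤ᵐ[volume.restrict (Set.Ioc f1 y)] fun t => Gg t - 1 := by
      filter_upwards [ae_restrict_mem measurableSet_Ioc] with t ht
      have := hGg_ge1 t; simp only [Pi.zero_apply]; linarith
    have hnn2 : 0 ≤ᵐ[volume.restrict (Set.Ioc (1:ℝ) x)] fun u => y - F u := by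
      filter_upwards [ae_restrict_mem measurableSet_Ioc] with u hu
      have : F u ≤ y := by rw [← hFx]; exact hFmono hu.2
      simp only [Pi.zero_apply]; linarith
    have heq1 : (∫ t in Set.Ioc f1 y, (Gg t - 1)) = ∫ u in Set.Ioc (1:ℝ) x, (y - F u) := by
      have hof : ENNReal.ofReal (∫ t in Set.Ioc f1 y, (Gg t - 1))
          = ENNReal.ofReal (∫ u in Set.Ioc (1:ℝ) x, (y - F u)) := by
        rw [ofReal_integral_eq_lintegral_ofReal hGg1Int hnn1,
          ofReal_integral_eq_lintegral_ofReal hyFInt hnn2, ← fub1, ← fub2]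
      exact (ENNReal.ofReal_eq_ofReal_iff (integral_nonneg_of_ae hnn1)
        (integral_nonneg_of_ae hnn2)).1 hof
    have e1 : (∫ t in Set.Ioc f1 y, (Gg t - 1)) = (∫ t in f1..y, Gg t) - (y - f1) := by
      rw [integral_sub hGgInt hc1, setIntegral_const,
        intervalIntegral.integral_of_le hf1y, Real.volume_real_Ioc_of_le hf1y]
      simp
    have e2 : (∫ u in Set.Ioc (1:ℝ) x, (y - F u))
        = (x - 1) * y - ∫ u in (1:ℝ)..x, F u := by
      rw [integral_sub hcy hFInt, setIntegral_const,
        intervalIntegral.integral_of_le hx1, Real.volume_real_Ioc_of_le hx1, smul_eq_mul]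
    have hYoung : (∫ t in f1..y, Gg t) = x * y - f1 - ∫ u in (1:ℝ)..x, F u := by
      rw [e1, e2] at heq1; linarith
    have hImg : Set.Ioc (φ 1) (Real.exp y) = Real.exp '' Set.Ioc f1 y := by
      ext r
      simp only [Set.mem_image, Set.mem_Ioc]
      constructor
      · rintro ⟨h1, h2⟩
        have hr0 : 0 < r := hφ1pos.trans h1
        refine ⟨Real.log r, ⟨?_, ?_⟩, Real.exp_log hr0⟩
        · exact Real.log_lt_log hφ1pos h1
        · calc Real.log r ≤ Real.log (Real.exp y) := Real.log_le_log hr0 h2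
            _ = y := Real.log_exp y
      · rintro ⟨t, ⟨h1, h2⟩, rfl⟩
        constructor
        · calc φ 1 = Real.exp f1 := (Real.exp_log hφ1pos).symm
            _ < Real.exp t := Real.exp_lt_exp.2 h1
        · exact Real.exp_le_exp.2 h2
    have hchg : (∫ r in Real.exp '' Set.Ioc f1 y, ϕ r / r)
        = ∫ t in Set.Ioc f1 y, |Real.exp t| • (ϕ (Real.exp t) / Real.exp t) :=
      integral_image_eq_integral_abs_deriv_smul measurableSet_Ioc
        (fun t _ => (Real.hasDerivAt_exp t).hasDerivWithinAt)
        Real.exp_injective.injOn _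
    have hsimp : (∫ t in Set.Ioc f1 y, |Real.exp t| • (ϕ (Real.exp t) / Real.exp t))
        = ∫ t in Set.Ioc f1 y, Gg t := by
      refine setIntegral_congr_fun measurableSet_Ioc fun t ht => ?_
      rw [abs_of_pos (Real.exp_pos t), smul_eq_mul, hGg_eq t ht.1.le]
      field_simp
    have hsub : (∫ r in (φ 1)..(Real.exp y), ϕ r / r) = ∫ t in f1..y, Gg t := by
      rw [intervalIntegral.integral_of_le hEy, intervalIntegral.integral_of_le hf1y,
        hImg, hchg, hsimp]
    have hbound : ∀ r ∈ Set.Ioc (φ 0) (Real.exp y), |ϕ r / r| ≤ (x + 1) / φ 1 := by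
      intro r hr
      have hr0 : 0 < r := lt_of_le_of_lt hk0 hr.1
      have hϕr : 0 ≤ ϕ r := (hsurj r hr.1.le).1
      rw [abs_of_nonneg (div_nonneg hϕr hr0.le)]
      rcases le_total r (φ 1) with h | h
      · have hϕr1 : ϕ r ≤ 1 := by
          rw [← hϕφ1]
          exact hϕmono (Set.mem_Ici.2 hr.1.le) (Set.mem_Ici.2 hk_le) h
        have hlin : ϕ r * φ 1 ≤ φ (ϕ r) := bern_lin_lb repJ hϕr hϕr1
        rw [(hsurj r hr.1.le).2] at hlin
        have hd : ϕ r / r ≤ 1 / φ 1 := by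
          rw [div_le_div_iff₀ hr0 hφ1pos]; linarith
        calc ϕ r / r ≤ 1 / φ 1 := hd
          _ ≤ (x + 1) / φ 1 := by gcongr; linarith
      · have hϕrx : ϕ r ≤ x :=
          hϕmono (Set.mem_Ici.2 hr.1.le) (Set.mem_Ici.2 hkEy) hr.2
        calc ϕ r / r ≤ x / φ 1 := div_le_div₀ hx0 hϕrx hφ1pos h
          _ ≤ (x + 1) / φ 1 := by gcongr; linarith
    have hmeasϕ : AEStronglyMeasurable (fun r => ϕ r / r)
        (volume.restrict (Set.Ioc (φ 0) (Real.exp y))) := by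
      have h1 : AEMeasurable ϕ (volume.restrict (Set.Ioc (φ 0) (Real.exp y))) :=
        aemeasurable_restrict_of_monotoneOn measurableSet_Ioc
          (hϕmono.mono (Set.Ioc_subset_Icc_self.trans Set.Icc_subset_Ici_self))
      exact (h1.div aemeasurable_id).aestronglyMeasurable
    have hIIey : IntervalIntegrable (fun r => ϕ r / r) volume (φ 0) (Real.exp y) := by
      rw [intervalIntegrable_iff_integrableOn_Ioc_of_le hkEy]
      refine Integrable.mono' (g := fun _ : ℝ => (x + 1) / φ 1)
        (integrableOn_const measure_Ioc_lt_top.ne) hmeasϕ ?_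
      filter_upwards [ae_restrict_mem measurableSet_Ioc] with r hr
      exact hbound r hr
    have hIIφ1 : IntervalIntegrable (fun r => ϕ r / r) volume (φ 0) (φ 1) := by
      refine hIIey.mono_set ?_
      rw [Set.uIcc_of_le hk_le, Set.uIcc_of_le hkEy]
      exact Set.Icc_subset_Icc le_rfl hEy
    have hsplit := intervalIntegral.integral_interval_sub_left hIIey hIIφ1
    rw [hsplit, hsub, hYoung, hG x]
    have hFcong : (∫ u in (1:ℝ)..x, F u) = ∫ r in (1:ℝ)..x, Real.log (φ r) := by
      refine intervalIntegral.integral_congr fun u hu => ?_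
      rw [Set.uIcc_of_le hx1] at hu
      exact hF_eq u hu.1
    rw [hFcong]
    ring


end
end

section
/- Let a ∈ ℝ and let ψ₁, ψ₂ : ℝ → ℝ be measurable functions, differentiable on (a,∞), such that ψ₁'(y) → ∞ and ψ₂'(y) → ∞ as y → ∞ and such that e^{−ψ₁} and e^{−ψ₂} are integrable on ℝ. Let f, g ∈ L¹(ℝ) satisfy lim_{y→∞} f(y)·e^{ψ₁(y)} = 1 and lim_{y→∞} g(y)·e^{ψ₂(y)} = 1. Then lim_{x→∞} (f*g)(x) / (e^{−ψ₁} * e^{−ψ₂})(x) = 1, where (f*g)(x) = ∫_ℝ f(x−y) g(y) dy denotes additive convolution. -/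
open MeasureTheory Filter Topology Set
open scoped ENNReal

noncomputable section

namespace ConvTailAux

lemma conv_integrable {w h : ℝ → ℝ} {b C₁ C₂ : ℝ}
    (hw : Integrable w) (hh : Integrable h)
    (hwb : ∀ z, b ≤ z → |w z| ≤ C₁) (hhb : ∀ y, b ≤ y → |h y| ≤ C₂)
    {x : ℝ} (hx : b + b ≤ x) :
    Integrable (fun y => w (x - y) * h y) := by
  have hwx : Integrable (fun y => w (x - y)) := hw.comp_sub_left x
  have hmaj : Integrable (fun y => C₁ * |h y| + C₂ * |w (x - y)|) :=
    (hh.abs.const_mul C₁).add (hwx.abs.const_mul C₂)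
  refine hmaj.mono' (hwx.aestronglyMeasurable.mul hh.aestronglyMeasurable) ?_
  refine Filter.Eventually.of_forall fun y => ?_
  have hC₁ : 0 ≤ C₁ := (abs_nonneg _).trans (hwb b le_rfl)
  have hC₂ : 0 ≤ C₂ := (abs_nonneg _).trans (hhb b le_rfl)
  rw [Real.norm_eq_abs, abs_mul]
  rcases le_or_gt y (x - b) with hy | hy
  · have h1 : |w (x - y)| ≤ C₁ := hwb _ (by linarith)
    nlinarith [abs_nonneg (h y), abs_nonneg (w (x - y))]
  · have h1 : |h y| ≤ C₂ := hhb _ (by linarith)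
    nlinarith [abs_nonneg (h y), abs_nonneg (w (x - y))]

lemma window_pos {ψ : ℝ → ℝ} (hi : Integrable (fun y => Real.exp (-ψ y))) (s : ℝ) :
    0 < ∫ y in Ioc s (s + 1), Real.exp (-ψ y) := by
  rw [setIntegral_pos_iff_support_of_nonneg_ae
      (Filter.Eventually.of_forall fun y => (Real.exp_pos _).le) hi.integrableOn]
  have hsupp : Function.support (fun y => Real.exp (-ψ y)) = univ := by
    ext y; simp [Real.exp_ne_zero]
  rw [hsupp, univ_inter, Real.volume_Ioc]
  norm_num


lemma exp_tail_bound {ψ : ℝ → ℝ} {b : ℝ} (mono : MonotoneOn ψ (Ici b)) :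
    ∀ z, b ≤ z → |Real.exp (-ψ z)| ≤ Real.exp (-ψ b) := fun z hz => by
  rw [abs_of_pos (Real.exp_pos _)]
  exact Real.exp_le_exp.2 (neg_le_neg (mono (mem_Ici.2 le_rfl) (mem_Ici.2 hz) hz))

lemma denom_integrable {ψ₁ ψ₂ : ℝ → ℝ} {b : ℝ}
    (hi₁ : Integrable (fun y => Real.exp (-ψ₁ y))) (hi₂ : Integrable (fun y => Real.exp (-ψ₂ y)))
    (mono₁ : MonotoneOn ψ₁ (Ici b)) (mono₂ : MonotoneOn ψ₂ (Ici b))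
    {x : ℝ} (hx1 : b + b ≤ x) :
    Integrable (fun y => Real.exp (-ψ₁ (x - y)) * Real.exp (-ψ₂ y)) :=
  conv_integrable hi₁ hi₂ (exp_tail_bound mono₁) (exp_tail_bound mono₂) hx1

lemma denom_lower {ψ₁ ψ₂ : ℝ → ℝ} {b : ℝ}
    (hi₁ : Integrable (fun y => Real.exp (-ψ₁ y))) (hi₂ : Integrable (fun y => Real.exp (-ψ₂ y)))
    (mono₁ : MonotoneOn ψ₁ (Ici b)) (mono₂ : MonotoneOn ψ₂ (Ici b))
    {s x : ℝ} (hs : b ≤ s) (hx1 : b + b ≤ x) (hx2 : b + s + 1 ≤ x) :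
    (∫ y in Ioc s (s + 1), Real.exp (-ψ₂ y)) * Real.exp (-ψ₁ (x - s)) ≤
      ∫ y, Real.exp (-ψ₁ (x - y)) * Real.exp (-ψ₂ y) := by
  have hint := denom_integrable hi₁ hi₂ mono₁ mono₂ hx1
  have step1 : (∫ y in Ioc s (s + 1), Real.exp (-ψ₁ (x - y)) * Real.exp (-ψ₂ y)) ≤
      ∫ y, Real.exp (-ψ₁ (x - y)) * Real.exp (-ψ₂ y) :=
    setIntegral_le_integral hint (Filter.Eventually.of_forall fun y => by positivity)
  have step2 : (∫ y in Ioc s (s + 1), Real.exp (-ψ₁ (x - s)) * Real.exp (-ψ₂ y)) ≤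
      ∫ y in Ioc s (s + 1), Real.exp (-ψ₁ (x - y)) * Real.exp (-ψ₂ y) := by
    refine setIntegral_mono_on (hi₂.integrableOn.const_mul _) hint.integrableOn
      measurableSet_Ioc fun y hy => ?_
    have h1 : ψ₁ (x - y) ≤ ψ₁ (x - s) := by
      refine mono₁ (mem_Ici.2 (by linarith [hy.2])) (mem_Ici.2 (by linarith)) (by linarith [hy.1])
    exact mul_le_mul_of_nonneg_right (Real.exp_le_exp.2 (neg_le_neg h1)) (Real.exp_pos _).le
  calc (∫ y in Ioc s (s + 1), Real.exp (-ψ₂ y)) * Real.exp (-ψ₁ (x - s))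
      = ∫ y in Ioc s (s + 1), Real.exp (-ψ₁ (x - s)) * Real.exp (-ψ₂ y) := by
        rw [MeasureTheory.integral_const_mul, mul_comm]
    _ ≤ _ := step2.trans step1


lemma exp_small_vs_denom {a b : ℝ} {ψ₁ ψ₂ : ℝ → ℝ} (hab : a < b)
    (hd₁ : ∀ y : ℝ, a < y → DifferentiableAt ℝ ψ₁ y)
    (hder₁ : Tendsto (deriv ψ₁) atTop atTop)
    (hi₁ : Integrable (fun y => Real.exp (-ψ₁ y))) (hi₂ : Integrable (fun y => Real.exp (-ψ₂ y)))
    (mono₁ : MonotoneOn ψ₁ (Ici b)) (mono₂ : MonotoneOn ψ₂ (Ici b))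
    (T : ℝ) {c ε : ℝ} (hc : 0 ≤ c) (hε : 0 < ε) :
    ∀ᶠ x in atTop, c * Real.exp (-ψ₁ (x - T)) ≤
      ε * ∫ y, Real.exp (-ψ₁ (x - y)) * Real.exp (-ψ₂ y) := by
  rcases eq_or_lt_of_le hc with rfl | hc
  · filter_upwards with x
    have h0 : 0 ≤ ∫ y, Real.exp (-ψ₁ (x - y)) * Real.exp (-ψ₂ y) :=
      integral_nonneg fun y => by positivity
    nlinarith
  set s₀ := max T b with hs₀
  set c₂ := ∫ y in Ioc (s₀ + 1) (s₀ + 1 + 1), Real.exp (-ψ₂ y) with hc₂def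
  have hc₂ : 0 < c₂ := window_pos hi₂ _
  set K := Real.log (c / (ε * c₂)) with hK
  have hexpK : c * Real.exp (-K) = ε * c₂ := by
    rw [Real.exp_neg, hK, Real.exp_log (by positivity)]
    field_simp
  obtain ⟨R₀, hR₀⟩ := (hder₁.eventually_ge_atTop K).exists_forall_of_atTop
  set R := max R₀ (max (a + 1) b) with hR
  filter_upwards [eventually_ge_atTop (max (R + s₀ + 1) (max (b + b) (b + s₀ + 2)))] with x hx
  have hx1 : R + s₀ + 1 ≤ x := le_trans (le_max_left _ _) hx
  have hx2 : b + b ≤ x := le_trans (le_trans (le_max_left _ _) (le_max_right _ _)) hx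
  have hx3 : b + s₀ + 2 ≤ x := le_trans (le_trans (le_max_right _ _) (le_max_right _ _)) hx
  have hRa : a + 1 ≤ R := le_trans (le_max_left _ _) (le_max_right _ _)
  have hRb : b ≤ R := le_trans (le_max_right _ _) (le_max_right _ _)
  have hR₀R : R₀ ≤ R := le_max_left _ _
  -- MVT on [x - s₀ - 1, x - s₀]
  have hmvt : K ≤ ψ₁ (x - s₀) - ψ₁ (x - s₀ - 1) := by
    set u := x - s₀ - 1 with hu
    have hRu : R ≤ u := by simp only [hu]; linarith
    have hau : a < u := by linarith
    have hcont : ContinuousOn ψ₁ (Icc u (u + 1)) := fun z hz =>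
      ((hd₁ z (lt_of_lt_of_le hau hz.1)).continuousAt).continuousWithinAt
    have hdiff : DifferentiableOn ℝ ψ₁ (Ioo u (u + 1)) := fun z hz =>
      (hd₁ z (lt_trans hau hz.1)).differentiableWithinAt
    obtain ⟨p, hp, hslope⟩ := exists_deriv_eq_slope ψ₁ (by linarith : u < u + 1) hcont hdiff
    have hKp : K ≤ deriv ψ₁ p := hR₀ p (le_trans hR₀R (le_trans hRu hp.1.le))
    rw [hslope] at hKp
    have huu : u + 1 = x - s₀ := by simp only [hu]; ring
    rw [huu] at hKp
    have hden : x - s₀ - u = 1 := by simp only [hu]; ring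
    rw [hden, div_one] at hKp
    exact hKp
  have hmono : ψ₁ (x - s₀) ≤ ψ₁ (x - T) := by
    refine mono₁ (mem_Ici.2 (by linarith)) (mem_Ici.2 ?_) (by simp only [hs₀]; linarith [le_max_left T b])
    have : T ≤ s₀ := le_max_left T b
    linarith
  have hlow : c₂ * Real.exp (-ψ₁ (x - (s₀ + 1))) ≤
      ∫ y, Real.exp (-ψ₁ (x - y)) * Real.exp (-ψ₂ y) :=
    denom_lower hi₁ hi₂ mono₁ mono₂ (by linarith [le_max_right T b]) hx2 (by linarith)
  have hchain : c * Real.exp (-ψ₁ (x - T)) ≤ ε * (c₂ * Real.exp (-ψ₁ (x - (s₀ + 1)))) := by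
    have e1 : Real.exp (-ψ₁ (x - T)) ≤ Real.exp (-ψ₁ (x - s₀)) :=
      Real.exp_le_exp.2 (neg_le_neg hmono)
    have e2 : Real.exp (-ψ₁ (x - s₀)) ≤ Real.exp (-K) * Real.exp (-ψ₁ (x - (s₀ + 1))) := by
      rw [← Real.exp_add]
      refine Real.exp_le_exp.2 ?_
      have : x - (s₀ + 1) = x - s₀ - 1 := by ring
      rw [this]; linarith
    calc c * Real.exp (-ψ₁ (x - T)) ≤ c * (Real.exp (-K) * Real.exp (-ψ₁ (x - (s₀ + 1)))) := by
          exact mul_le_mul_of_nonneg_left (e1.trans e2) hc.le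
      _ = (c * Real.exp (-K)) * Real.exp (-ψ₁ (x - (s₀ + 1))) := by ring
      _ = (ε * c₂) * Real.exp (-ψ₁ (x - (s₀ + 1))) := by rw [hexpK]
      _ = ε * (c₂ * Real.exp (-ψ₁ (x - (s₀ + 1)))) := by ring
  exact hchain.trans (mul_le_mul_of_nonneg_left hlow hε.le)

lemma tail_bound_of_tendsto {ψ : ℝ → ℝ} {h : ℝ → ℝ}
    (hh0 : Tendsto (fun y => h y * Real.exp (ψ y)) atTop (nhds 0))
    {δ : ℝ} (hδ : 0 < δ) (b : ℝ) :
    ∃ T, b ≤ T ∧ ∀ y, T ≤ y → |h y| ≤ δ * Real.exp (-ψ y) := by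
  have := NormedAddCommGroup.tendsto_nhds_zero.mp hh0 δ hδ
  obtain ⟨T₀, hT₀⟩ := this.exists_forall_of_atTop
  refine ⟨max T₀ b, le_max_right _ _, fun y hy => ?_⟩
  have h1 : ‖h y * Real.exp (ψ y)‖ < δ := hT₀ y (le_trans (le_max_left _ _) hy)
  rw [Real.norm_eq_abs, abs_mul, abs_of_pos (Real.exp_pos _)] at h1
  have h2 : |h y| = |h y| * Real.exp (ψ y) * Real.exp (-ψ y) := by
    rw [mul_assoc, ← Real.exp_add]; simp
  rw [h2]
  exact mul_le_mul_of_nonneg_right h1.le (Real.exp_pos _).le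

lemma D_swap (ψ₁ ψ₂ : ℝ → ℝ) (x : ℝ) :
    (∫ y, Real.exp (-ψ₂ (x - y)) * Real.exp (-ψ₁ y)) =
      ∫ y, Real.exp (-ψ₁ (x - y)) * Real.exp (-ψ₂ y) := by
  have h := integral_sub_left_eq_self
    (fun y => Real.exp (-ψ₂ (x - y)) * Real.exp (-ψ₁ y)) volume x
  simp only [sub_sub_cancel] at h
  rw [← h]
  congr 1
  ext y
  ring

lemma integral_abs_comp_sub (w : ℝ → ℝ) (x : ℝ) :
    (∫ y, |w (x - y)|) = ∫ y, |w y| :=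
  integral_sub_left_eq_self (fun y => |w y|) volume x


lemma conv_comm (u v : ℝ → ℝ) (x : ℝ) :
    (∫ y, u (x - y) * v y) = ∫ y, v (x - y) * u y := by
  have h := integral_sub_left_eq_self (fun y => u (x - y) * v y) volume x
  simp only [sub_sub_cancel] at h
  rw [← h]
  congr 1
  ext y
  ring

lemma cross_term_small {a b : ℝ} {ψ₁ ψ₂ : ℝ → ℝ} (hab : a < b)
    (hd₁ : ∀ y : ℝ, a < y → DifferentiableAt ℝ ψ₁ y)
    (hd₂ : ∀ y : ℝ, a < y → DifferentiableAt ℝ ψ₂ y)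
    (hder₁ : Tendsto (deriv ψ₁) atTop atTop)
    (hder₂ : Tendsto (deriv ψ₂) atTop atTop)
    (hi₁ : Integrable (fun y => Real.exp (-ψ₁ y))) (hi₂ : Integrable (fun y => Real.exp (-ψ₂ y)))
    (mono₁ : MonotoneOn ψ₁ (Ici b)) (mono₂ : MonotoneOn ψ₂ (Ici b))
    {w h : ℝ → ℝ} (hw : Integrable w) (hh : Integrable h)
    {C T₁ : ℝ} (hT₁ : b ≤ T₁) (hwb : ∀ z, T₁ ≤ z → |w z| ≤ C * Real.exp (-ψ₁ z))
    (hh0 : Tendsto (fun y => h y * Real.exp (ψ₂ y)) atTop (nhds 0))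
    {ε : ℝ} (hε : 0 < ε) :
    ∀ᶠ x in atTop, |∫ y, w (x - y) * h y| ≤
      ε * ∫ y, Real.exp (-ψ₁ (x - y)) * Real.exp (-ψ₂ y) := by
  have hC : 0 ≤ C := by
    have h0 := (abs_nonneg (w T₁)).trans (hwb T₁ le_rfl)
    nlinarith [Real.exp_pos (-ψ₁ T₁)]
  set δ := ε / (2 * (C + 1)) with hδdef
  have hδ : 0 < δ := by positivity
  obtain ⟨T₀, hT₀b, hT₀⟩ := tail_bound_of_tendsto hh0 one_pos b
  obtain ⟨Tδ, hTδ₁, hTδ⟩ := tail_bound_of_tendsto hh0 hδ (max T₀ b)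
  have hTδT₀ : T₀ ≤ Tδ := le_trans (le_max_left _ _) hTδ₁
  have hTδb : b ≤ Tδ := le_trans (le_max_right _ _) hTδ₁
  set Ch := ∫ y, |h y| with hChdef
  set Cw := ∫ y, |w y| with hCwdef
  have hCh : 0 ≤ Ch := integral_nonneg fun y => abs_nonneg _
  have hCw : 0 ≤ Cw := integral_nonneg fun y => abs_nonneg _
  set B := max (max T₁ Tδ) b with hBdef
  have hBb : b ≤ B := le_max_right _ _
  have hBT₁ : T₁ ≤ B := le_trans (le_max_left _ _) (le_max_left _ _)
  have hBTδ : Tδ ≤ B := le_trans (le_max_right _ _) (le_max_left _ _)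
  have hwB : ∀ z, B ≤ z → |w z| ≤ C * Real.exp (-ψ₁ T₁) := fun z hz => by
    refine (hwb z (le_trans hBT₁ hz)).trans ?_
    have h1 : ψ₁ T₁ ≤ ψ₁ z := mono₁ (mem_Ici.2 hT₁) (mem_Ici.2 (le_trans hBb hz))
      (le_trans hBT₁ hz)
    exact mul_le_mul_of_nonneg_left (Real.exp_le_exp.2 (neg_le_neg h1)) hC
  have hhB : ∀ y, B ≤ y → |h y| ≤ Real.exp (-ψ₂ T₀) := fun y hy => by
    have h1 : |h y| ≤ 1 * Real.exp (-ψ₂ y) := hT₀ y (le_trans hTδT₀ (le_trans hBTδ hy))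
    rw [one_mul] at h1
    refine h1.trans (Real.exp_le_exp.2 (neg_le_neg ?_))
    exact mono₂ (mem_Ici.2 hT₀b) (mem_Ici.2 (le_trans hBb hy))
      (le_trans hTδT₀ (le_trans hBTδ hy))
  have hE₁B : ∀ z, B ≤ z → |Real.exp (-ψ₁ z)| ≤ Real.exp (-ψ₁ B) := fun z hz => by
    rw [abs_of_pos (Real.exp_pos _)]
    exact Real.exp_le_exp.2 (neg_le_neg (mono₁ (mem_Ici.2 hBb)
      (mem_Ici.2 (hBb.trans hz)) hz))
  have hE₂B : ∀ z, B ≤ z → |Real.exp (-ψ₂ z)| ≤ Real.exp (-ψ₂ B) := fun z hz => by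
    rw [abs_of_pos (Real.exp_pos _)]
    exact Real.exp_le_exp.2 (neg_le_neg (mono₂ (mem_Ici.2 hBb)
      (mem_Ici.2 (hBb.trans hz)) hz))
  have E1 := exp_small_vs_denom hab hd₁ hder₁ hi₁ hi₂ mono₁ mono₂ Tδ
    (mul_nonneg hC hCh) (by positivity : (0:ℝ) < ε/4)
  have E2' := exp_small_vs_denom hab hd₂ hder₂ hi₂ hi₁ mono₂ mono₁ T₁
    hCw (by positivity : (0:ℝ) < ε/4)
  have E2 : ∀ᶠ x in atTop, Cw * Real.exp (-ψ₂ (x - T₁)) ≤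
      ε/4 * ∫ y, Real.exp (-ψ₁ (x - y)) * Real.exp (-ψ₂ y) := by
    filter_upwards [E2'] with x hx
    rwa [D_swap ψ₁ ψ₂ x] at hx
  filter_upwards [E1, E2,
    eventually_ge_atTop (max (B + B) (max (Tδ + T₁) (b + max T₁ Tδ)))] with x hxE1 hxE2 hx
  have hxBB : B + B ≤ x := le_trans (le_max_left _ _) hx
  have hxTT : Tδ + T₁ ≤ x := le_trans (le_trans (le_max_left _ _) (le_max_right _ _)) hx
  have hxbT : b + max T₁ Tδ ≤ x := le_trans (le_trans (le_max_right _ _) (le_max_right _ _)) hx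
  have hxbT₁ : b + T₁ ≤ x := le_trans (by simp [le_max_left]) hxbT
  have hxbTδ : b + Tδ ≤ x := le_trans (by simp [le_max_right]) hxbT
  set Dx := ∫ y, Real.exp (-ψ₁ (x - y)) * Real.exp (-ψ₂ y) with hDxdef
  have hDx0 : 0 ≤ Dx := integral_nonneg fun y => by positivity
  have hInt_wh : Integrable (fun y => w (x - y) * h y) :=
    conv_integrable hw hh hwB hhB hxBB
  have hInt_D : Integrable (fun y => Real.exp (-ψ₁ (x - y)) * Real.exp (-ψ₂ y)) :=
    conv_integrable hi₁ hi₂ hE₁B hE₂B hxBB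
  have hInt_E1h : Integrable (fun y => Real.exp (-ψ₁ (x - y)) * |h y|) :=
    conv_integrable hi₁ hh.abs hE₁B (fun y hy => by rw [abs_abs]; exact hhB y hy) hxBB
  have habs : |∫ y, w (x - y) * h y| ≤ ∫ y, |w (x - y) * h y| := by
    have hnn := norm_integral_le_integral_norm (μ := volume) (fun y => w (x - y) * h y)
    simp only [Real.norm_eq_abs] at hnn
    exact hnn
  have hsplit : (∫ y in Iic (x - T₁), |w (x - y) * h y|) +
      (∫ y in Ioi (x - T₁), |w (x - y) * h y|) = ∫ y, |w (x - y) * h y| :=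
    intervalIntegral.integral_Iic_add_Ioi hInt_wh.abs.integrableOn hInt_wh.abs.integrableOn
  have hIoi : (∫ y in Ioi (x - T₁), |w (x - y) * h y|) ≤ Cw * Real.exp (-ψ₂ (x - T₁)) := by
    have hp : ∀ y ∈ Ioi (x - T₁), |w (x - y) * h y| ≤ |w (x - y)| * Real.exp (-ψ₂ (x - T₁)) := by
      intro y hy
      have hy1 : x - T₁ ≤ y := (mem_Ioi.1 hy).le
      have hyT₀ : T₀ ≤ y := le_trans hTδT₀ (le_trans (by linarith : Tδ ≤ x - T₁) hy1)
      have h1 : |h y| ≤ 1 * Real.exp (-ψ₂ y) := hT₀ y hyT₀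
      rw [one_mul] at h1
      have h2 : Real.exp (-ψ₂ y) ≤ Real.exp (-ψ₂ (x - T₁)) :=
        Real.exp_le_exp.2 (neg_le_neg (mono₂ (mem_Ici.2 (by linarith))
          (mem_Ici.2 (by linarith)) hy1))
      rw [abs_mul]
      exact mul_le_mul_of_nonneg_left (h1.trans h2) (abs_nonneg _)
    calc (∫ y in Ioi (x - T₁), |w (x - y) * h y|)
        ≤ ∫ y in Ioi (x - T₁), |w (x - y)| * Real.exp (-ψ₂ (x - T₁)) :=
          setIntegral_mono_on hInt_wh.abs.integrableOn
            ((hw.comp_sub_left x).abs.mul_const _).integrableOn measurableSet_Ioi hp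
      _ ≤ ∫ y, |w (x - y)| * Real.exp (-ψ₂ (x - T₁)) :=
          setIntegral_le_integral ((hw.comp_sub_left x).abs.mul_const _)
            (Filter.Eventually.of_forall fun y => by positivity)
      _ = Cw * Real.exp (-ψ₂ (x - T₁)) := by
          rw [integral_mul_const, integral_abs_comp_sub]
  have hIic : (∫ y in Iic (x - T₁), |w (x - y) * h y|)
      ≤ C * ∫ y, Real.exp (-ψ₁ (x - y)) * |h y| := by
    have hp : ∀ y ∈ Iic (x - T₁), |w (x - y) * h y|
        ≤ C * (Real.exp (-ψ₁ (x - y)) * |h y|) := by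
      intro y hy
      have hyT : T₁ ≤ x - y := by
        have := mem_Iic.1 hy; linarith
      rw [abs_mul, ← mul_assoc]
      exact mul_le_mul_of_nonneg_right (hwb _ hyT) (abs_nonneg _)
    calc (∫ y in Iic (x - T₁), |w (x - y) * h y|)
        ≤ ∫ y in Iic (x - T₁), C * (Real.exp (-ψ₁ (x - y)) * |h y|) :=
          setIntegral_mono_on hInt_wh.abs.integrableOn
            (hInt_E1h.const_mul C).integrableOn measurableSet_Iic hp
      _ ≤ ∫ y, C * (Real.exp (-ψ₁ (x - y)) * |h y|) :=
          setIntegral_le_integral (hInt_E1h.const_mul C)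
            (Filter.Eventually.of_forall fun y => by positivity)
      _ = C * ∫ y, Real.exp (-ψ₁ (x - y)) * |h y| := integral_const_mul C _
  have hsplit2 : (∫ y in Iic Tδ, Real.exp (-ψ₁ (x - y)) * |h y|) +
      (∫ y in Ioi Tδ, Real.exp (-ψ₁ (x - y)) * |h y|)
      = ∫ y, Real.exp (-ψ₁ (x - y)) * |h y| :=
    intervalIntegral.integral_Iic_add_Ioi hInt_E1h.integrableOn hInt_E1h.integrableOn
  have hIic2 : (∫ y in Iic Tδ, Real.exp (-ψ₁ (x - y)) * |h y|)
      ≤ Real.exp (-ψ₁ (x - Tδ)) * Ch := by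
    have hp : ∀ y ∈ Iic Tδ, Real.exp (-ψ₁ (x - y)) * |h y|
        ≤ Real.exp (-ψ₁ (x - Tδ)) * |h y| := by
      intro y hy
      have hy1 : y ≤ Tδ := mem_Iic.1 hy
      have h1 : ψ₁ (x - Tδ) ≤ ψ₁ (x - y) :=
        mono₁ (mem_Ici.2 (by linarith)) (mem_Ici.2 (by linarith)) (by linarith)
      exact mul_le_mul_of_nonneg_right (Real.exp_le_exp.2 (neg_le_neg h1)) (abs_nonneg _)
    calc (∫ y in Iic Tδ, Real.exp (-ψ₁ (x - y)) * |h y|)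
        ≤ ∫ y in Iic Tδ, Real.exp (-ψ₁ (x - Tδ)) * |h y| :=
          setIntegral_mono_on hInt_E1h.integrableOn
            (hh.abs.const_mul _).integrableOn measurableSet_Iic hp
      _ ≤ ∫ y, Real.exp (-ψ₁ (x - Tδ)) * |h y| :=
          setIntegral_le_integral (hh.abs.const_mul _)
            (Filter.Eventually.of_forall fun y => by positivity)
      _ = Real.exp (-ψ₁ (x - Tδ)) * Ch := integral_const_mul _ _
  have hIoi2 : (∫ y in Ioi Tδ, Real.exp (-ψ₁ (x - y)) * |h y|) ≤ δ * Dx := by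
    have hp : ∀ y ∈ Ioi Tδ, Real.exp (-ψ₁ (x - y)) * |h y|
        ≤ δ * (Real.exp (-ψ₁ (x - y)) * Real.exp (-ψ₂ y)) := by
      intro y hy
      have h1 : |h y| ≤ δ * Real.exp (-ψ₂ y) := hTδ y (mem_Ioi.1 hy).le
      calc Real.exp (-ψ₁ (x - y)) * |h y|
          ≤ Real.exp (-ψ₁ (x - y)) * (δ * Real.exp (-ψ₂ y)) :=
            mul_le_mul_of_nonneg_left h1 (Real.exp_pos _).le
        _ = δ * (Real.exp (-ψ₁ (x - y)) * Real.exp (-ψ₂ y)) := by ring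
    calc (∫ y in Ioi Tδ, Real.exp (-ψ₁ (x - y)) * |h y|)
        ≤ ∫ y in Ioi Tδ, δ * (Real.exp (-ψ₁ (x - y)) * Real.exp (-ψ₂ y)) :=
          setIntegral_mono_on hInt_E1h.integrableOn
            (hInt_D.const_mul δ).integrableOn measurableSet_Ioi hp
      _ ≤ ∫ y, δ * (Real.exp (-ψ₁ (x - y)) * Real.exp (-ψ₂ y)) :=
          setIntegral_le_integral (hInt_D.const_mul δ)
            (Filter.Eventually.of_forall fun y => by positivity)
      _ = δ * Dx := integral_const_mul δ _
  have hCδ : C * δ ≤ ε/2 := by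
    rw [hδdef, ← mul_div_assoc, div_le_div_iff₀ (by positivity) (by norm_num : (0:ℝ) < 2)]
    nlinarith
  calc |∫ y, w (x - y) * h y| ≤ ∫ y, |w (x - y) * h y| := habs
    _ = (∫ y in Iic (x - T₁), |w (x - y) * h y|) +
        (∫ y in Ioi (x - T₁), |w (x - y) * h y|) := hsplit.symm
    _ ≤ C * (∫ y, Real.exp (-ψ₁ (x - y)) * |h y|) + Cw * Real.exp (-ψ₂ (x - T₁)) :=
        add_le_add hIic hIoi
    _ = C * ((∫ y in Iic Tδ, Real.exp (-ψ₁ (x - y)) * |h y|) +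
        (∫ y in Ioi Tδ, Real.exp (-ψ₁ (x - y)) * |h y|)) + Cw * Real.exp (-ψ₂ (x - T₁)) := by
        rw [hsplit2]
    _ ≤ C * (Real.exp (-ψ₁ (x - Tδ)) * Ch + δ * Dx) + ε/4 * Dx :=
        add_le_add (mul_le_mul_of_nonneg_left (add_le_add hIic2 hIoi2) hC) hxE2
    _ = C * Ch * Real.exp (-ψ₁ (x - Tδ)) + C * δ * Dx + ε/4 * Dx := by ring
    _ ≤ ε/4 * Dx + ε/2 * Dx + ε/4 * Dx :=
        add_le_add (add_le_add hxE1 (mul_le_mul_of_nonneg_right hCδ hDx0)) le_rfl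
    _ = ε * Dx := by ring


end ConvTailAux

open ConvTailAux

/-- If `f ∼ e^{−ψ₁}` and `g ∼ e^{−ψ₂}` at `+∞`, where `ψ₁, ψ₂` are
differentiable on `(a,∞)` with derivatives tending to `∞` and `e^{−ψᵢ}` integrable, then
`(f*g)(x) ∼ (e^{−ψ₁} * e^{−ψ₂})(x)` as `x → ∞`. -/
theorem convolution_tail_asymptotics
    (a : ℝ) (ψ₁ ψ₂ : ℝ → ℝ) (hm₁ : Measurable ψ₁) (hm₂ : Measurable ψ₂)
    (hd₁ : ∀ y : ℝ, a < y → DifferentiableAt ℝ ψ₁ y)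
    (hd₂ : ∀ y : ℝ, a < y → DifferentiableAt ℝ ψ₂ y)
    (hψ₁ : Tendsto (deriv ψ₁) atTop atTop)
    (hψ₂ : Tendsto (deriv ψ₂) atTop atTop)
    (hi₁ : Integrable (fun y : ℝ => Real.exp (-ψ₁ y)))
    (hi₂ : Integrable (fun y : ℝ => Real.exp (-ψ₂ y)))
    (f g : ℝ → ℝ) (hf : Integrable f) (hg : Integrable g)
    (hfa : Tendsto (fun y : ℝ => f y * Real.exp (ψ₁ y)) atTop (nhds 1))
    (hga : Tendsto (fun y : ℝ => g y * Real.exp (ψ₂ y)) atTop (nhds 1)) :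
    Tendsto (fun x : ℝ => (∫ y : ℝ, f (x - y) * g y) /
        ∫ y : ℝ, Real.exp (-ψ₁ (x - y)) * Real.exp (-ψ₂ y))
      atTop (nhds 1) := by
  -- choose `b` beyond which both derivatives are nonnegative
  obtain ⟨b₀, hb₀⟩ := ((hψ₁.eventually_ge_atTop 0).and (hψ₂.eventually_ge_atTop 0)).exists_forall_of_atTop
  set b := max b₀ (a + 1) with hbdef
  have hab : a < b := lt_of_lt_of_le (by linarith) (le_max_right _ _)
  have hbder : ∀ y, b ≤ y → 0 ≤ deriv ψ₁ y ∧ 0 ≤ deriv ψ₂ y := fun y hy =>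
    hb₀ y (le_trans (le_max_left _ _) hy)
  have mono₁ : MonotoneOn ψ₁ (Ici b) := by
    refine monotoneOn_of_deriv_nonneg (convex_Ici b) (fun z hz => ?_) (fun z hz => ?_) (fun z hz => ?_)
    · exact ((hd₁ z (lt_of_lt_of_le hab hz)).continuousAt).continuousWithinAt
    · rw [interior_Ici] at hz
      exact (hd₁ z (lt_trans hab hz)).differentiableWithinAt
    · rw [interior_Ici] at hz
      exact (hbder z hz.le).1
  have mono₂ : MonotoneOn ψ₂ (Ici b) := by
    refine monotoneOn_of_deriv_nonneg (convex_Ici b) (fun z hz => ?_) (fun z hz => ?_) (fun z hz => ?_)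
    · exact ((hd₂ z (lt_of_lt_of_le hab hz)).continuousAt).continuousWithinAt
    · rw [interior_Ici] at hz
      exact (hd₂ z (lt_trans hab hz)).differentiableWithinAt
    · rw [interior_Ici] at hz
      exact (hbder z hz.le).2
  set E₁ : ℝ → ℝ := fun z => Real.exp (-ψ₁ z) with hE₁def
  set E₂ : ℝ → ℝ := fun z => Real.exp (-ψ₂ z) with hE₂def
  set h₁ : ℝ → ℝ := fun y => f y - E₁ y with hh₁def
  set h₂ : ℝ → ℝ := fun y => g y - E₂ y with hh₂def
  have hh₁int : Integrable h₁ := hf.sub hi₁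
  have hh₂int : Integrable h₂ := hg.sub hi₂
  have hexp1 : ∀ y : ℝ, E₁ y * Real.exp (ψ₁ y) = 1 := fun y => by
    rw [hE₁def, ← Real.exp_add]; simp
  have hexp2 : ∀ y : ℝ, E₂ y * Real.exp (ψ₂ y) = 1 := fun y => by
    rw [hE₂def, ← Real.exp_add]; simp
  have hh₁0 : Tendsto (fun y => h₁ y * Real.exp (ψ₁ y)) atTop (nhds 0) := by
    have := hfa.sub_const 1
    rw [sub_self] at this
    refine this.congr fun y => ?_
    rw [hh₁def]
    simp only [sub_mul, hexp1 y]
  have hh₂0 : Tendsto (fun y => h₂ y * Real.exp (ψ₂ y)) atTop (nhds 0) := by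
    have := hga.sub_const 1
    rw [sub_self] at this
    refine this.congr fun y => ?_
    rw [hh₂def]
    simp only [sub_mul, hexp2 y]
  -- tail bound for f and g
  obtain ⟨Tf, hTfb, hTf⟩ := tail_bound_of_tendsto hh₁0 one_pos b
  have hfb : ∀ z, Tf ≤ z → |f z| ≤ 2 * Real.exp (-ψ₁ z) := fun z hz => by
    have h1 := hTf z hz
    have : f z = h₁ z + E₁ z := by rw [hh₁def]; ring
    rw [this]
    calc |h₁ z + E₁ z| ≤ |h₁ z| + |E₁ z| := abs_add_le _ _
      _ ≤ 1 * Real.exp (-ψ₁ z) + Real.exp (-ψ₁ z) := by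
          refine add_le_add h1 ?_
          rw [hE₁def, abs_of_pos (Real.exp_pos _)]
      _ = 2 * Real.exp (-ψ₁ z) := by ring
  obtain ⟨Tg, hTgb, hTg⟩ := tail_bound_of_tendsto hh₂0 one_pos b
  have hgb : ∀ z, Tg ≤ z → |g z| ≤ 2 * Real.exp (-ψ₂ z) := fun z hz => by
    have h1 := hTg z hz
    have : g z = h₂ z + E₂ z := by rw [hh₂def]; ring
    rw [this]
    calc |h₂ z + E₂ z| ≤ |h₂ z| + |E₂ z| := abs_add_le _ _
      _ ≤ 1 * Real.exp (-ψ₂ z) + Real.exp (-ψ₂ z) := by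
          refine add_le_add h1 ?_
          rw [hE₂def, abs_of_pos (Real.exp_pos _)]
      _ = 2 * Real.exp (-ψ₂ z) := by ring
  -- the two cross terms are eventually small, for every ε
  have key : ∀ ε : ℝ, 0 < ε → ∀ᶠ x in atTop,
      |(∫ y, f (x - y) * g y) - ∫ y, Real.exp (-ψ₁ (x - y)) * Real.exp (-ψ₂ y)|
        ≤ ε * ∫ y, Real.exp (-ψ₁ (x - y)) * Real.exp (-ψ₂ y) := by
    intro ε hε
    have cross1 := cross_term_small hab hd₁ hd₂ hψ₁ hψ₂ hi₁ hi₂ mono₁ mono₂ hf hh₂int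
      hTfb hfb hh₂0 (half_pos hε)
    have cross2' := cross_term_small hab hd₂ hd₁ hψ₂ hψ₁ hi₂ hi₁ mono₂ mono₁ hi₂ hh₁int
      (le_refl b) (fun z _ => by rw [abs_of_pos (Real.exp_pos _), one_mul]) hh₁0 (half_pos hε)
    -- tail constants for integrability
    set B := max (max Tf Tg) b with hBdef
    have hBb : b ≤ B := le_max_right _ _
    have hfB : ∀ z, B ≤ z → |f z| ≤ 2 * Real.exp (-ψ₁ Tf) := fun z hz => by
      have h1 := hfb z (le_trans (le_trans (le_max_left _ _) (le_max_left _ _)) hz)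
      refine h1.trans ?_
      have : ψ₁ Tf ≤ ψ₁ z := mono₁ (mem_Ici.2 hTfb) (mem_Ici.2 (hBb.trans hz))
        (le_trans (le_trans (le_max_left _ _) (le_max_left _ _)) hz)
      have := Real.exp_le_exp.2 (neg_le_neg this)
      linarith
    have hgB : ∀ z, B ≤ z → |g z| ≤ 2 * Real.exp (-ψ₂ Tg) := fun z hz => by
      have h1 := hgb z (le_trans (le_trans (le_max_right _ _) (le_max_left _ _)) hz)
      refine h1.trans ?_
      have : ψ₂ Tg ≤ ψ₂ z := mono₂ (mem_Ici.2 hTgb) (mem_Ici.2 (hBb.trans hz))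
        (le_trans (le_trans (le_max_right _ _) (le_max_left _ _)) hz)
      have := Real.exp_le_exp.2 (neg_le_neg this)
      linarith
    have hE₁B : ∀ z, B ≤ z → |Real.exp (-ψ₁ z)| ≤ Real.exp (-ψ₁ B) := fun z hz => by
      rw [abs_of_pos (Real.exp_pos _)]
      exact Real.exp_le_exp.2 (neg_le_neg (mono₁ (mem_Ici.2 hBb)
        (mem_Ici.2 (hBb.trans hz)) hz))
    have hE₂B : ∀ z, B ≤ z → |Real.exp (-ψ₂ z)| ≤ Real.exp (-ψ₂ B) := fun z hz => by
      rw [abs_of_pos (Real.exp_pos _)]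
      exact Real.exp_le_exp.2 (neg_le_neg (mono₂ (mem_Ici.2 hBb)
        (mem_Ici.2 (hBb.trans hz)) hz))
    filter_upwards [cross1, cross2', eventually_ge_atTop (B + B)] with x hx1 hx2 hxB
    -- integrability of all four products
    have hInt_fg : Integrable (fun y => f (x - y) * g y) :=
      conv_integrable hf hg hfB hgB hxB
    have hInt_fE₂ : Integrable (fun y => f (x - y) * E₂ y) :=
      conv_integrable hf hi₂ hfB hE₂B hxB
    have hInt_E₁E₂ : Integrable (fun y => Real.exp (-ψ₁ (x - y)) * Real.exp (-ψ₂ y)) :=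
      conv_integrable hi₁ hi₂ hE₁B hE₂B hxB
    -- rewrite cross2' using commutativity
    have hx2' : |∫ y, h₁ (x - y) * E₂ y| ≤
        ε/2 * ∫ y, Real.exp (-ψ₁ (x - y)) * Real.exp (-ψ₂ y) := by
      rw [conv_comm h₁ E₂ x]
      have hD := conv_comm (fun z => Real.exp (-ψ₁ z)) (fun z => Real.exp (-ψ₂ z)) x
      calc |∫ y, E₂ (x - y) * h₁ y| ≤ ε/2 * ∫ y, Real.exp (-ψ₂ (x - y)) * Real.exp (-ψ₁ y) := hx2
        _ = ε/2 * ∫ y, Real.exp (-ψ₁ (x - y)) * Real.exp (-ψ₂ y) := by rw [← hD]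
    -- decomposition identity
    have hdecomp : (∫ y, f (x - y) * g y) - (∫ y, Real.exp (-ψ₁ (x - y)) * Real.exp (-ψ₂ y))
        = (∫ y, h₁ (x - y) * E₂ y) + ∫ y, f (x - y) * h₂ y := by
      have e1 : (∫ y, h₁ (x - y) * E₂ y)
          = (∫ y, f (x - y) * E₂ y) - ∫ y, Real.exp (-ψ₁ (x - y)) * Real.exp (-ψ₂ y) := by
        rw [← integral_sub hInt_fE₂ hInt_E₁E₂]
        congr 1
        ext y
        rw [hh₁def, hE₁def, hE₂def]
        ring
      have e2 : (∫ y, f (x - y) * h₂ y)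
          = (∫ y, f (x - y) * g y) - ∫ y, f (x - y) * E₂ y := by
        rw [← integral_sub hInt_fg hInt_fE₂]
        congr 1
        ext y
        rw [hh₂def]
        ring
      rw [e1, e2]
      ring
    rw [hdecomp]
    calc |(∫ y, h₁ (x - y) * E₂ y) + ∫ y, f (x - y) * h₂ y|
        ≤ |∫ y, h₁ (x - y) * E₂ y| + |∫ y, f (x - y) * h₂ y| := abs_add_le _ _
      _ ≤ ε/2 * (∫ y, Real.exp (-ψ₁ (x - y)) * Real.exp (-ψ₂ y)) +
          ε/2 * (∫ y, Real.exp (-ψ₁ (x - y)) * Real.exp (-ψ₂ y)) := add_le_add hx2' hx1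
      _ = ε * ∫ y, Real.exp (-ψ₁ (x - y)) * Real.exp (-ψ₂ y) := by ring
  -- eventual positivity of the denominator
  have hpos : ∀ᶠ x in atTop, 0 < ∫ y, Real.exp (-ψ₁ (x - y)) * Real.exp (-ψ₂ y) := by
    filter_upwards [eventually_ge_atTop (max (b + b) (b + b + 1))] with x hx
    have h1 := denom_lower hi₁ hi₂ mono₁ mono₂ (le_refl b)
      (le_trans (le_max_left _ _) hx) (le_trans (le_max_right _ _) hx)
    have h2 : 0 < (∫ y in Ioc b (b + 1), Real.exp (-ψ₂ y)) * Real.exp (-ψ₁ (x - b)) :=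
      mul_pos (window_pos hi₂ b) (Real.exp_pos _)
    linarith
  -- conclude
  have hzero : Tendsto (fun x : ℝ => (∫ y : ℝ, f (x - y) * g y) /
      (∫ y : ℝ, Real.exp (-ψ₁ (x - y)) * Real.exp (-ψ₂ y)) - 1) atTop (nhds 0) := by
    rw [NormedAddCommGroup.tendsto_nhds_zero]
    intro ε hε
    filter_upwards [key (ε/2) (half_pos hε), hpos] with x hx hD
    set N := ∫ y : ℝ, f (x - y) * g y
    set D := ∫ y : ℝ, Real.exp (-ψ₁ (x - y)) * Real.exp (-ψ₂ y)
    rw [Real.norm_eq_abs, div_sub_one hD.ne', abs_div, abs_of_pos hD]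
    have hle : |N - D| / D ≤ ε / 2 := by
      rw [div_le_iff₀ hD]
      exact hx
    exact lt_of_le_of_lt hle (by linarith)
  have hfinal := hzero.add (tendsto_const_nhds (x := (1 : ℝ)) (f := atTop))
  rw [zero_add] at hfinal
  refine hfinal.congr fun x => ?_
  ring

end
end
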